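/- arXiv:1310.2438 — 5 statements merged into one kernel-verified Lean document; each statement's English description precedes it below -/
import Mathlib

section
/- Let p be a polynomial of degree at most m and q a polynomial of degree at most n. If either p and q have a common root, or simultaneously the coefficient of z^m in p and the coefficient of z^n in q vanish, then the (m+n+1)×(m+n+2) Sylvester-like matrix S = S(q,-p) (whose first n+1 columns are the shifted coefficient vectors of q and whose last m+1 columns are the shifted coefficient vectors of -p, extended by one row beyond the classical Sylvester matrix) does not have full row rank m+n+1. -/
noncomputable section
open Matrix Finset Polynomial

/-- Spectral (operator `ℓ² → ℓ²`) norm of a complex matrix. -/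
def specNorm {α β : Type} [Fintype α] [Fintype β] [DecidableEq α] [DecidableEq β]
    (A : Matrix α β ℂ) : ℝ :=
  ‖(Matrix.toEuclideanLin A).toContinuousLinearMap‖

/-- Moore–Penrose pseudoinverse `A† = Aᴴ (A Aᴴ)⁻¹` of a full row rank matrix. -/
def pinv {α β : Type} [Fintype α] [Fintype β] [DecidableEq α] [DecidableEq β]
    (A : Matrix α β ℂ) : Matrix β α ℂ :=
  Aᴴ * (A * Aᴴ)⁻¹

/-- Sylvester-like matrix `S = S(q,-p)` of size `(m+n+1) × (m+n+2)`: for `0 ≤ k ≤ m` the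
`(j,k)` entry is `q_{j-k}`, and for `0 ≤ k ≤ n` the `(j, m+1+k)` entry is `-p_{j-k}`
(coefficients out of range being `0`). -/
def sylv (m n : ℕ) (p q : Polynomial ℂ) : Matrix (Fin (m + n + 1)) (Fin (m + n + 2)) ℂ :=
  fun j k =>
    if (k : ℕ) ≤ m then
      (if (k : ℕ) ≤ (j : ℕ) then q.coeff ((j : ℕ) - (k : ℕ)) else 0)
    else
      (if (k : ℕ) - (m + 1) ≤ (j : ℕ) then -p.coeff ((j : ℕ) - ((k : ℕ) - (m + 1))) else 0)

lemma shift_sum_eval (r : Polynomial ℂ) (z : ℂ) (N k : ℕ) (h : r.natDegree + k ≤ N) :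
    ∑ j ∈ Finset.range (N + 1), z ^ j * (if k ≤ j then r.coeff (j - k) else 0)
      = z ^ k * r.eval z := by
  have hk : k ≤ N + 1 := by omega
  rw [show Finset.range (N + 1) = Finset.Ico 0 (N + 1) from Finset.range_eq_Ico _,
    ← Finset.sum_Ico_consecutive _ (Nat.zero_le k) hk]
  have h1 : ∑ j ∈ Finset.Ico 0 k, z ^ j * (if k ≤ j then r.coeff (j - k) else 0) = 0 := by
    refine Finset.sum_eq_zero fun j hj => ?_
    simp only [Finset.mem_Ico] at hj
    rw [if_neg (by omega), mul_zero]
  rw [h1, zero_add, Finset.sum_Ico_eq_sum_range]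
  have h2 : ∀ i ∈ Finset.range (N + 1 - k),
      z ^ (k + i) * (if k ≤ k + i then r.coeff (k + i - k) else 0)
        = z ^ k * (r.coeff i * z ^ i) := by
    intro i _
    rw [if_pos (Nat.le_add_right k i), Nat.add_sub_cancel_left, pow_add]
    ring
  rw [Finset.sum_congr rfl h2, ← Finset.mul_sum,
    ← Polynomial.eval_eq_sum_range' (by omega) z]

lemma rank_ne_of_vecMul_eq_zero {a b : ℕ} (A : Matrix (Fin a) (Fin b) ℂ)
    (u : Fin a → ℂ) (hu : u ≠ 0) (h : Matrix.vecMul u A = 0) : A.rank ≠ a := by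
  intro hrank
  have hA : A.rank = Aᵀ.rank := (Matrix.rank_transpose A).symm
  have hker : u ∈ LinearMap.ker Aᵀ.mulVecLin := by
    rw [LinearMap.mem_ker, Matrix.mulVecLin_apply, Matrix.mulVec_transpose, h]
  have hfin := LinearMap.finrank_range_add_finrank_ker Aᵀ.mulVecLin
  rw [Module.finrank_fintype_fun_eq_card, Fintype.card_fin] at hfin
  have : Aᵀ.rank + Module.finrank ℂ (LinearMap.ker Aᵀ.mulVecLin) = a := hfin
  rw [← hA, hrank] at this
  have hker0 : Module.finrank ℂ (LinearMap.ker Aᵀ.mulVecLin) = 0 := by omega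
  rw [Submodule.finrank_eq_zero] at hker0
  rw [hker0, Submodule.mem_bot] at hker
  exact hu hker

/-- if `p, q` have a common root, or `p_m = q_n = 0`, then the Sylvester-like
matrix `S(q,-p)` does not have full row rank `m+n+1`. -/
theorem sylvester_not_full_rank_of_degenerate (m n : ℕ) (p q : Polynomial ℂ)
    (hp : p.natDegree ≤ m) (hq : q.natDegree ≤ n)
    (hdeg : (∃ z : ℂ, p.eval z = 0 ∧ q.eval z = 0) ∨ (p.coeff m = 0 ∧ q.coeff n = 0)) :
    (sylv m n p q).rank ≠ m + n + 1 := by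
  rcases hdeg with ⟨z, hpz, hqz⟩ | ⟨hpm, hqn⟩
  · refine rank_ne_of_vecMul_eq_zero _ (fun j => z ^ (j : ℕ)) ?_ ?_
    · intro h
      have := congrFun h 0
      simp at this
    · funext k
      simp only [Matrix.vecMul, dotProduct, Pi.zero_apply]
      by_cases hk : (k : ℕ) ≤ m
      · have hk' : q.natDegree + (k : ℕ) ≤ m + n := by omega
        calc ∑ j : Fin (m + n + 1), z ^ (j : ℕ) * sylv m n p q j k
            = ∑ j ∈ Finset.range (m + n + 1), z ^ j *
              (if (k : ℕ) ≤ j then q.coeff (j - (k : ℕ)) else 0) := by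
              rw [← Fin.sum_univ_eq_sum_range (fun j => z ^ j *
                (if (k : ℕ) ≤ j then q.coeff (j - (k : ℕ)) else 0)) (m + n + 1)]
              refine Finset.sum_congr rfl fun j _ => ?_
              simp [sylv, hk]
          _ = z ^ (k : ℕ) * q.eval z := shift_sum_eval q z (m + n) (k : ℕ) hk'
          _ = 0 := by rw [hqz, mul_zero]
      · have hk2 : (k : ℕ) - (m + 1) ≤ n := by omega
        have hk' : p.natDegree + ((k : ℕ) - (m + 1)) ≤ m + n := by omega
        calc ∑ j : Fin (m + n + 1), z ^ (j : ℕ) * sylv m n p q j k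
            = ∑ j ∈ Finset.range (m + n + 1), z ^ j *
              (if (k : ℕ) - (m + 1) ≤ j then -p.coeff (j - ((k : ℕ) - (m + 1))) else 0) := by
              rw [← Fin.sum_univ_eq_sum_range (fun j => z ^ j *
                (if (k : ℕ) - (m + 1) ≤ j then -p.coeff (j - ((k : ℕ) - (m + 1))) else 0))
                (m + n + 1)]
              refine Finset.sum_congr rfl fun j _ => ?_
              simp [sylv, hk]
          _ = z ^ ((k : ℕ) - (m + 1)) * (-p).eval z := by
              rw [← shift_sum_eval (-p) z (m + n) ((k : ℕ) - (m + 1))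
                (by simpa using hk')]
              simp
          _ = 0 := by simp [hpz]
  · -- last row is zero
    refine rank_ne_of_vecMul_eq_zero _ (Pi.single (Fin.last (m + n)) 1) ?_ ?_
    · intro h
      have := congrFun h (Fin.last (m + n))
      simp at this
    · funext k
      simp only [Matrix.vecMul, dotProduct, Pi.zero_apply]
      rw [Finset.sum_eq_single (Fin.last (m + n))]
      · have hlast : ((Fin.last (m + n) : Fin (m + n + 1)) : ℕ) = m + n := rfl
        by_cases hk : (k : ℕ) ≤ m
        · have hco : q.coeff (m + n - (k : ℕ)) = 0 := by
            rcases eq_or_lt_of_le (show n ≤ m + n - (k : ℕ) by omega) with h | h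
            · rw [← h]; exact hqn
            · exact q.coeff_eq_zero_of_natDegree_lt (lt_of_le_of_lt hq h)
          simp [sylv, hk, hlast, hco]
        · have hk2 : (k : ℕ) - (m + 1) ≤ n := by omega
          have hco : p.coeff (m + n - ((k : ℕ) - (m + 1))) = 0 := by
            rcases eq_or_lt_of_le (show m ≤ m + n - ((k : ℕ) - (m + 1)) by omega) with h | h
            · rw [← h]; exact hpm
            · exact p.coeff_eq_zero_of_natDegree_lt (lt_of_le_of_lt hp h)
          simp [sylv, hk, hlast, hco]
      · intro b _ hb
        simp [Pi.single_eq_of_ne hb]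
      · intro h
        simp at h
end
end

section
/- Let p of degree ≤ m and q of degree ≤ n have normalized coefficient vector, i.e., ∑|p_j|² + ∑|q_j|² = 1. Then for all |z| ≤ 1, |p(z)|² + |q(z)|² ≤ (m+n+1)·‖S‖², where S = S(q,-p) is the Sylvester-like matrix and ‖·‖ the spectral norm. -/
noncomputable section
open Matrix Finset Polynomial

/-- Squared Euclidean norm of the stacked coefficient vector of `p/q ∈ R_{m,n}`. -/
def coeffNorm2 (m n : ℕ) (p q : Polynomial ℂ) : ℝ :=
  (∑ j ∈ Finset.range (m + 1), ‖p.coeff j‖ ^ 2)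
    + (∑ j ∈ Finset.range (n + 1), ‖q.coeff j‖ ^ 2)

open scoped Matrix.Norms.L2Operator

/-- under the coefficient normalization, for `|z| ≤ 1` one has
`|p(z)|² + |q(z)|² ≤ (m+n+1)·‖S‖²`. -/
theorem eval_sq_le_of_normalized (m n : ℕ) (p q : Polynomial ℂ)
    (hp : p.natDegree ≤ m) (hq : q.natDegree ≤ n)
    (hnorm : coeffNorm2 m n p q = 1) (z : ℂ) (hz : ‖z‖ ≤ 1) :
    ‖p.eval z‖ ^ 2 + ‖q.eval z‖ ^ 2 ≤
      (m + n + 1 : ℝ) * specNorm (sylv m n p q) ^ 2 := by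
  set S := sylv m n p q with hS
  -- the conjugated power vector
  set v : EuclideanSpace ℂ (Fin (m + n + 1)) :=
    WithLp.toLp 2 (fun j => (starRingEnd ℂ) (z ^ (j : ℕ))) with hv
  set w : EuclideanSpace ℂ (Fin (m + n + 2)) :=
    (EuclideanSpace.equiv (Fin (m + n + 2)) ℂ).symm (Sᴴ *ᵥ v) with hwdef
  have hnormS : specNorm S = ‖Sᴴ‖ := (Matrix.l2_opNorm_conjTranspose S).symm
  have hw : ‖w‖ ≤ specNorm S * ‖v‖ := by
    rw [hnormS]; exact Matrix.l2_opNorm_mulVec Sᴴ v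
  -- entries of w
  have hwk : ∀ k : Fin (m + n + 2),
      w k = (starRingEnd ℂ) (∑ j : Fin (m + n + 1), S j k * z ^ (j : ℕ)) := by
    intro k
    have h1 : w k = ∑ j : Fin (m + n + 1),
        (starRingEnd ℂ) (S j k) * (starRingEnd ℂ) (z ^ (j : ℕ)) := rfl
    rw [h1, map_sum]
    exact Finset.sum_congr rfl fun j _ => (map_mul _ _ _).symm
  have hk0v : w (⟨0, by omega⟩ : Fin (m + n + 2)) = (starRingEnd ℂ) (q.eval z) := by
    rw [hwk]
    congr 1
    rw [eval_eq_sum_range' (n := m + n + 1) (by omega) z, ← Fin.sum_univ_eq_sum_range]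
    refine Finset.sum_congr rfl fun j _ => ?_
    simp [hS, sylv]
  have hk1v : w (⟨m + 1, by omega⟩ : Fin (m + n + 2)) = (starRingEnd ℂ) (-(p.eval z)) := by
    rw [hwk]
    congr 1
    rw [eval_eq_sum_range' (n := m + n + 1) (by omega) z, ← Fin.sum_univ_eq_sum_range,
      ← Finset.sum_neg_distrib]
    refine Finset.sum_congr rfl fun j _ => ?_
    simp [hS, sylv]
  -- ‖w‖² ≥ |p(z)|² + |q(z)|²
  have hwsq : ‖w‖ ^ 2 = ∑ k : Fin (m + n + 2), ‖w k‖ ^ 2 := by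
    rw [EuclideanSpace.norm_eq, Real.sq_sqrt]
    positivity
  have hlow : ‖p.eval z‖ ^ 2 + ‖q.eval z‖ ^ 2 ≤ ‖w‖ ^ 2 := by
    rw [hwsq]
    have hsub : ({⟨0, by omega⟩, ⟨m + 1, by omega⟩} : Finset (Fin (m + n + 2))) ⊆ univ :=
      Finset.subset_univ _
    have hne : (⟨0, by omega⟩ : Fin (m + n + 2)) ≠ ⟨m + 1, by omega⟩ := by
      simp [Fin.ext_iff]
    calc ‖p.eval z‖ ^ 2 + ‖q.eval z‖ ^ 2
        = ∑ k ∈ ({⟨0, by omega⟩, ⟨m + 1, by omega⟩} : Finset (Fin (m + n + 2))), ‖w k‖ ^ 2 := by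
          rw [Finset.sum_pair hne, hk0v, hk1v]
          simp [map_neg, add_comm]
      _ ≤ ∑ k : Fin (m + n + 2), ‖w k‖ ^ 2 :=
          Finset.sum_le_sum_of_subset_of_nonneg hsub (fun k _ _ => by positivity)
  -- ‖v‖² ≤ m + n + 1
  have hvsq : ‖v‖ ^ 2 ≤ (m + n + 1 : ℝ) := by
    rw [EuclideanSpace.norm_eq, Real.sq_sqrt (by positivity)]
    calc (∑ j : Fin (m + n + 1), ‖v j‖ ^ 2) ≤ ∑ _j : Fin (m + n + 1), (1 : ℝ) := by
          refine Finset.sum_le_sum fun j _ => ?_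
          have : ‖v j‖ ≤ 1 := by
            simp only [hv, Complex.norm_conj, norm_pow]
            exact pow_le_one₀ (norm_nonneg z) hz
          nlinarith [norm_nonneg (v j)]
      _ = (m + n + 1 : ℝ) := by simp
  have hN : (0 : ℝ) ≤ specNorm S := by rw [hnormS]; exact norm_nonneg _
  calc ‖p.eval z‖ ^ 2 + ‖q.eval z‖ ^ 2
      ≤ ‖w‖ ^ 2 := hlow
    _ ≤ (specNorm S * ‖v‖) ^ 2 := by
        apply pow_le_pow_left₀ (norm_nonneg _) hw
    _ = ‖v‖ ^ 2 * specNorm S ^ 2 := by ring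
    _ ≤ (m + n + 1 : ℝ) * specNorm S ^ 2 := by
        apply mul_le_mul_of_nonneg_right hvsq (by positivity)
end
end

section
/- Let r = p/q be nondegenerate with normalized coefficient vector, S = S(q,-p), and let r̃ be a function meromorphic on the closed unit disk with sup_{z∈𝔻} χ(r(z), r̃(z)) ≤ 1/3. If σ, τ ∈ 𝔻 satisfy r̃(σ)=0 and r̃(τ)=∞ (a Froissart doublet of r̃), then |σ - τ| ≥ 1/(3√2·(m+n+1)^{3/2}·κ(S)). -/
noncomputable section
open Matrix Finset Polynomial

/-- Spectral condition number `κ(S) = ‖S‖·‖S†‖` of the Sylvester-like matrix. -/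
def condS (m n : ℕ) (p q : Polynomial ℂ) : ℝ :=
  specNorm (sylv m n p q) * specNorm (pinv (sylv m n p q))

/-- Chordal distance `χ(a/b, c/d)` between two points of the Riemann sphere given in
homogeneous coordinates: `|a d - c b| / (√(|a|²+|b|²) √(|c|²+|d|²))`. -/
def chord (a b c d : ℂ) : ℝ :=
  ‖a * d - c * b‖ /
    (Real.sqrt (‖a‖ ^ 2 + ‖b‖ ^ 2) *
      Real.sqrt (‖c‖ ^ 2 + ‖d‖ ^ 2))

open scoped Matrix.Norms.L2Operator

lemma specNorm_eq {a b : ℕ} (A : Matrix (Fin a) (Fin b) ℂ) : specNorm A = ‖A‖ := rfl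

lemma specNorm_nonneg' {a b : ℕ} (A : Matrix (Fin a) (Fin b) ℂ) : 0 ≤ specNorm A := by
  rw [specNorm_eq]; exact norm_nonneg _

lemma euclid_norm {a : ℕ} (v : Fin a → ℂ) :
    ‖((EuclideanSpace.equiv (Fin a) ℂ).symm v : EuclideanSpace ℂ (Fin a))‖
      = Real.sqrt (∑ i, ‖v i‖ ^ 2) := by
  simp [EuclideanSpace.norm_eq]

lemma vecMul_norm_le {a b : ℕ} (A : Matrix (Fin a) (Fin b) ℂ) (x : Fin a → ℂ) :
    Real.sqrt (∑ k, ‖(x ᵥ* A) k‖ ^ 2)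
      ≤ specNorm A * Real.sqrt (∑ j, ‖x j‖ ^ 2) := by
  have h := Matrix.l2_opNorm_mulVec Aᴴ ((EuclideanSpace.equiv (Fin a) ℂ).symm (star x))
  rw [Matrix.l2_opNorm_conjTranspose] at h
  have h1 : (Aᴴ *ᵥ (star x)) = star (x ᵥ* A) := by
    rw [Matrix.mulVec_conjTranspose, star_star]
  calc Real.sqrt (∑ k, ‖(x ᵥ* A) k‖ ^ 2)
      = ‖((EuclideanSpace.equiv (Fin b) ℂ).symm (Aᴴ *ᵥ (star x)) : EuclideanSpace ℂ (Fin b))‖ := by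
        rw [euclid_norm, h1]
        simp [Pi.star_apply, Complex.norm_conj]
    _ ≤ ‖A‖ * ‖((EuclideanSpace.equiv (Fin a) ℂ).symm (star x) : EuclideanSpace ℂ (Fin a))‖ := h
    _ = specNorm A * Real.sqrt (∑ j, ‖x j‖ ^ 2) := by
        rw [specNorm_eq, euclid_norm]
        simp [Pi.star_apply, Complex.norm_conj]

lemma comp_le_norm {b : ℕ} (x : Fin b → ℂ) (k : Fin b) :
    ‖x k‖ ≤ Real.sqrt (∑ i, ‖x i‖ ^ 2) := by
  rw [show ‖x k‖ = Real.sqrt (‖x k‖ ^ 2) by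
    rw [Real.sqrt_sq (norm_nonneg _)]]
  exact Real.sqrt_le_sqrt (Finset.single_le_sum (f := fun i => ‖x i‖ ^ 2)
    (fun i _ => sq_nonneg _) (mem_univ k))

lemma lagrange_id (a b c d : ℂ) :
    (‖a‖ ^ 2 + ‖b‖ ^ 2) * (‖c‖ ^ 2 + ‖d‖ ^ 2)
      = ‖a * d - c * b‖ ^ 2
        + ‖a * (starRingEnd ℂ) c + b * (starRingEnd ℂ) d‖ ^ 2 := by
  simp only [Complex.sq_norm, Complex.normSq_apply, Complex.mul_re, Complex.mul_im,
    Complex.sub_re, Complex.sub_im, Complex.add_re, Complex.add_im, Complex.conj_re,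
    Complex.conj_im]
  ring

lemma sqrt_sq_add_sq_le (x y : ℝ) (hx : 0 ≤ x) (hy : 0 ≤ y) :
    Real.sqrt (x ^ 2 + y ^ 2) ≤ x + y := by
  rw [show x + y = Real.sqrt ((x + y) ^ 2) by rw [Real.sqrt_sq (by positivity)]]
  apply Real.sqrt_le_sqrt
  nlinarith

lemma poly_lip (f : Polynomial ℂ) (C : ℝ)
    (hC : ∀ z ∈ Metric.closedBall (0:ℂ) 1, ‖(Polynomial.derivative f).eval z‖ ≤ C)
    {x y : ℂ} (hx : x ∈ Metric.closedBall (0:ℂ) 1) (hy : y ∈ Metric.closedBall (0:ℂ) 1) :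
    ‖f.eval y - f.eval x‖ ≤ C * ‖y - x‖ := by
  have := Convex.norm_image_sub_le_of_norm_hasFDerivWithin_le
    (f := fun z => f.eval z)
    (f' := fun z => ContinuousLinearMap.smulRight (1 : ℂ →L[ℂ] ℂ) ((Polynomial.derivative f).eval z))
    (fun z _ => (f.hasDerivAt z).hasFDerivAt.hasFDerivWithinAt)
    (fun z hz => by
      rw [ContinuousLinearMap.norm_smulRight_apply, ContinuousLinearMap.one_def,
        ContinuousLinearMap.norm_id, one_mul]
      exact hC z hz)
    (convex_closedBall _ _) hx hy
  simpa using this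

lemma eval_eq_sum_range_le (f : Polynomial ℂ) {M : ℕ} (h : f.natDegree ≤ M) (z : ℂ) :
    f.eval z = ∑ i ∈ range (M + 1), f.coeff i * z ^ i := by
  rw [Polynomial.eval_eq_sum_range]
  apply Finset.sum_subset (Finset.range_subset_range.2 (by omega))
  intro i _ hi
  rw [Polynomial.coeff_eq_zero_of_natDegree_lt, zero_mul]
  simp only [Finset.mem_range, not_lt] at hi
  omega

lemma deriv_eval_eq (f : Polynomial ℂ) {M : ℕ} (h : f.natDegree ≤ M) (z : ℂ) :
    (Polynomial.derivative f).eval z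
      = ∑ j ∈ range (M + 1), (j : ℂ) * z ^ (j - 1) * f.coeff j := by
  have hd : (Polynomial.derivative f).natDegree ≤ M :=
    le_trans (Polynomial.natDegree_derivative_le f) (by omega)
  rw [eval_eq_sum_range_le _ hd z, Finset.sum_range_succ' (fun j => (j : ℂ) * z ^ (j - 1) * f.coeff j) M]
  simp only [Nat.cast_zero, zero_mul, add_zero, Nat.cast_add, Nat.cast_one]
  rw [Finset.sum_range_succ]
  have : f.coeff (M + 1) = 0 := Polynomial.coeff_eq_zero_of_natDegree_lt (by omega)
  simp only [Polynomial.coeff_derivative]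
  rw [this]
  simp only [mul_zero, zero_mul, add_zero]
  apply Finset.sum_congr rfl
  intro i _
  simp only [Nat.add_sub_cancel]
  ring

lemma shift_sum (f : Polynomial ℂ) (M k : ℕ) (hf : f.natDegree + k ≤ M) (z : ℂ) :
    ∑ j ∈ range (M + 1), z ^ j * (if k ≤ j then f.coeff (j - k) else 0)
      = z ^ k * f.eval z := by
  rw [Finset.range_eq_Ico, ← Finset.sum_Ico_consecutive _ (Nat.zero_le k) (by omega : k ≤ M + 1)]
  have h1 : ∑ j ∈ Finset.Ico 0 k, z ^ j * (if k ≤ j then f.coeff (j - k) else 0) = 0 := by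
    apply Finset.sum_eq_zero
    intro j hj
    simp only [Finset.mem_Ico] at hj
    rw [if_neg (by omega), mul_zero]
  rw [h1, zero_add, Finset.sum_Ico_eq_sum_range]
  have h2 : ∀ i ∈ range (M + 1 - k), z ^ (k + i) * (if k ≤ k + i then f.coeff (k + i - k) else 0)
      = z ^ k * (f.coeff i * z ^ i) := by
    intro i _
    rw [if_pos (by omega), Nat.add_sub_cancel_left, pow_add]
    ring
  rw [Finset.sum_congr rfl h2, ← Finset.mul_sum]
  congr 1
  have : M + 1 - k = (M - k) + 1 := by omega
  rw [this, ← eval_eq_sum_range_le f (by omega) z]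

section RowLemmas

variable {m n : ℕ} {p q : Polynomial ℂ}

lemma row_eval (hp : p.natDegree ≤ m) (hq : q.natDegree ≤ n) (z : ℂ) (k : Fin (m + n + 2)) :
    ((fun j : Fin (m + n + 1) => z ^ (j : ℕ)) ᵥ* sylv m n p q) k
      = if (k : ℕ) ≤ m then z ^ (k : ℕ) * q.eval z
        else -(z ^ ((k : ℕ) - (m + 1)) * p.eval z) := by
  have hs : ((fun j : Fin (m + n + 1) => z ^ (j : ℕ)) ᵥ* sylv m n p q) k
      = ∑ j ∈ range (m + n + 1), z ^ j *
          (if (k : ℕ) ≤ m then (if (k : ℕ) ≤ j then q.coeff (j - (k : ℕ)) else 0)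
           else (if (k : ℕ) - (m + 1) ≤ j then -p.coeff (j - ((k : ℕ) - (m + 1))) else 0)) := by
    rw [Matrix.vecMul, dotProduct]
    rw [← Fin.sum_univ_eq_sum_range (fun j => z ^ j *
          (if (k : ℕ) ≤ m then (if (k : ℕ) ≤ j then q.coeff (j - (k : ℕ)) else 0)
           else (if (k : ℕ) - (m + 1) ≤ j then -p.coeff (j - ((k : ℕ) - (m + 1))) else 0)))]
    rfl
  rw [hs]
  by_cases hk : (k : ℕ) ≤ m
  · simp only [if_pos hk]
    exact shift_sum q (m + n) (k : ℕ) (by omega) z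
  · simp only [if_neg hk]
    have hk2 : (k : ℕ) - (m + 1) ≤ n := by have := k.2; omega
    calc ∑ j ∈ range (m + n + 1), z ^ j *
          (if (k : ℕ) - (m + 1) ≤ j then -p.coeff (j - ((k : ℕ) - (m + 1))) else 0)
        = -∑ j ∈ range (m + n + 1), z ^ j *
          (if (k : ℕ) - (m + 1) ≤ j then p.coeff (j - ((k : ℕ) - (m + 1))) else 0) := by
          rw [← Finset.sum_neg_distrib]
          apply Finset.sum_congr rfl
          intro j _
          split <;> simp
      _ = -(z ^ ((k : ℕ) - (m + 1)) * p.eval z) := by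
          rw [shift_sum p (m + n) _ (by omega) z]

lemma row_deriv_q (hq : q.natDegree ≤ n) (z : ℂ) :
    ((fun j : Fin (m + n + 1) => (j : ℂ) * z ^ ((j : ℕ) - 1)) ᵥ* sylv m n p q)
        (⟨0, by omega⟩ : Fin (m + n + 2))
      = (Polynomial.derivative q).eval z := by
  have hs : ((fun j : Fin (m + n + 1) => (j : ℂ) * z ^ ((j : ℕ) - 1)) ᵥ* sylv m n p q)
        (⟨0, by omega⟩ : Fin (m + n + 2))
      = ∑ j ∈ range (m + n + 1), (j : ℂ) * z ^ (j - 1) * q.coeff j := by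
    rw [Matrix.vecMul, dotProduct]
    rw [← Fin.sum_univ_eq_sum_range (fun j => (j : ℂ) * z ^ (j - 1) * q.coeff j)]
    apply Finset.sum_congr rfl
    intro j _
    simp only [sylv]
    rw [if_pos (Nat.zero_le m), if_pos (Nat.zero_le _)]
    simp [mul_assoc]
  rw [hs, ← deriv_eval_eq q (by omega) z]

lemma row_deriv_p (hp : p.natDegree ≤ m) (z : ℂ) :
    ((fun j : Fin (m + n + 1) => (j : ℂ) * z ^ ((j : ℕ) - 1)) ᵥ* sylv m n p q)
        (⟨m + 1, by omega⟩ : Fin (m + n + 2))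
      = -((Polynomial.derivative p).eval z) := by
  have hs : ((fun j : Fin (m + n + 1) => (j : ℂ) * z ^ ((j : ℕ) - 1)) ᵥ* sylv m n p q)
        (⟨m + 1, by omega⟩ : Fin (m + n + 2))
      = ∑ j ∈ range (m + n + 1), -((j : ℂ) * z ^ (j - 1) * p.coeff j) := by
    rw [Matrix.vecMul, dotProduct]
    rw [← Fin.sum_univ_eq_sum_range (fun j => -((j : ℂ) * z ^ (j - 1) * p.coeff j))]
    apply Finset.sum_congr rfl
    intro j _
    simp only [sylv]
    rw [if_neg (by omega), if_pos (by omega)]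
    simp only [Nat.add_sub_cancel_left, Nat.sub_self, Nat.sub_zero]
    ring
  rw [hs, Finset.sum_neg_distrib, ← deriv_eval_eq p (by omega) z]

lemma deriv_bound (hp : p.natDegree ≤ m) (hq : q.natDegree ≤ n) (z : ℂ)
    (hz : ‖z‖ ≤ 1) :
    ‖(Polynomial.derivative p).eval z‖
        ≤ ((m : ℝ) + n + 1) ^ ((3 : ℝ) / 2) * specNorm (sylv m n p q)
      ∧ ‖(Polynomial.derivative q).eval z‖
        ≤ ((m : ℝ) + n + 1) ^ ((3 : ℝ) / 2) * specNorm (sylv m n p q) := by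
  set x : Fin (m + n + 1) → ℂ := fun j => (j : ℂ) * z ^ ((j : ℕ) - 1) with hx
  have hxnorm : Real.sqrt (∑ j, ‖x j‖ ^ 2)
      ≤ ((m : ℝ) + n + 1) ^ ((3 : ℝ) / 2) := by
    have hterm : ∀ j : Fin (m + n + 1), ‖x j‖ ^ 2 ≤ ((m : ℝ) + n) ^ 2 := by
      intro j
      have h1 : ‖x j‖ ≤ (m : ℝ) + n := by
        rw [hx]
        simp only [norm_mul, norm_pow, Complex.norm_natCast]
        have h2 : ‖z‖ ^ ((j : ℕ) - 1) ≤ 1 :=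
          pow_le_one₀ (norm_nonneg z) hz
        have h3 : ((j : ℕ) : ℝ) ≤ (m : ℝ) + n := by
          have h4 : (j : ℕ) ≤ m + n := by have := j.2; omega
          exact_mod_cast h4
        have h5 : (0:ℝ) ≤ ((j : ℕ) : ℝ) := by positivity
        have h6 : (0:ℝ) ≤ ‖z‖ ^ ((j : ℕ) - 1) := by positivity
        nlinarith
      exact pow_le_pow_left₀ (norm_nonneg _) h1 2
    have hsum : (∑ j, ‖x j‖ ^ 2) ≤ ((m : ℝ) + n + 1) * ((m : ℝ) + n) ^ 2 := by
      calc (∑ j, ‖x j‖ ^ 2) ≤ ∑ _j : Fin (m + n + 1), ((m : ℝ) + n) ^ 2 :=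
            Finset.sum_le_sum (fun j _ => hterm j)
        _ = ((m : ℝ) + n + 1) * ((m : ℝ) + n) ^ 2 := by
            rw [Finset.sum_const, Finset.card_univ, Fintype.card_fin]
            push_cast
            ring
    have hcube : ((m : ℝ) + n + 1) * ((m : ℝ) + n) ^ 2 ≤ ((m : ℝ) + n + 1) ^ 3 := by nlinarith [sq_nonneg ((m:ℝ)+n)]
    have hrpow : ((m : ℝ) + n + 1) ^ ((3 : ℝ) / 2) = Real.sqrt (((m : ℝ) + n + 1) ^ 3) := by
      rw [Real.sqrt_eq_rpow, ← Real.rpow_natCast ((m : ℝ) + n + 1) 3,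
        ← Real.rpow_mul (by positivity)]
      norm_num
    rw [hrpow]
    exact Real.sqrt_le_sqrt (by linarith)
  have hvec := vecMul_norm_le (sylv m n p q) x
  constructor
  · have hcomp := comp_le_norm (x ᵥ* sylv m n p q) (⟨m + 1, by omega⟩ : Fin (m + n + 2))
    rw [row_deriv_p hp z, norm_neg] at hcomp
    calc ‖(Polynomial.derivative p).eval z‖
        ≤ Real.sqrt (∑ k, ‖(x ᵥ* sylv m n p q) k‖ ^ 2) := hcomp
      _ ≤ specNorm (sylv m n p q) * Real.sqrt (∑ j, ‖x j‖ ^ 2) := hvec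
      _ ≤ specNorm (sylv m n p q) * (((m : ℝ) + n + 1) ^ ((3 : ℝ) / 2)) := by
          apply mul_le_mul_of_nonneg_left hxnorm (specNorm_nonneg' _)
      _ = ((m : ℝ) + n + 1) ^ ((3 : ℝ) / 2) * specNorm (sylv m n p q) := mul_comm _ _
  · have hcomp := comp_le_norm (x ᵥ* sylv m n p q) (⟨0, by omega⟩ : Fin (m + n + 2))
    rw [row_deriv_q hq z] at hcomp
    calc ‖(Polynomial.derivative q).eval z‖
        ≤ Real.sqrt (∑ k, ‖(x ᵥ* sylv m n p q) k‖ ^ 2) := hcomp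
      _ ≤ specNorm (sylv m n p q) * Real.sqrt (∑ j, ‖x j‖ ^ 2) := hvec
      _ ≤ specNorm (sylv m n p q) * (((m : ℝ) + n + 1) ^ ((3 : ℝ) / 2)) := by
          apply mul_le_mul_of_nonneg_left hxnorm (specNorm_nonneg' _)
      _ = ((m : ℝ) + n + 1) ^ ((3 : ℝ) / 2) * specNorm (sylv m n p q) := mul_comm _ _

lemma lower_bound (hp : p.natDegree ≤ m) (hq : q.natDegree ≤ n)
    (hinv : IsUnit (sylv m n p q * (sylv m n p q)ᴴ).det) (z : ℂ)
    (hz : ‖z‖ ≤ 1) :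
    1 ≤ Real.sqrt (‖p.eval z‖ ^ 2 + ‖q.eval z‖ ^ 2)
        * specNorm (pinv (sylv m n p q)) := by
  set S := sylv m n p q with hS
  have hSp : S * pinv S = 1 := by
    unfold pinv
    rw [← Matrix.mul_assoc, Matrix.mul_nonsing_inv _ hinv]
  set y : Fin (m + n + 1) → ℂ := fun j => z ^ (j : ℕ) with hy
  have hyinv : y = (y ᵥ* S) ᵥ* pinv S := by
    rw [Matrix.vecMul_vecMul, hSp, Matrix.vecMul_one]
  set G : ℝ := ∑ j, ‖y j‖ ^ 2 with hG
  have hG1 : 1 ≤ G := by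
    have h0 : ‖y (⟨0, by omega⟩ : Fin (m + n + 1))‖ ^ 2 = 1 := by
      simp [hy]
    rw [← h0]
    exact Finset.single_le_sum (f := fun j => ‖y j‖ ^ 2)
      (fun i _ => sq_nonneg _) (mem_univ _)
  set Nz : ℝ := ‖p.eval z‖ ^ 2 + ‖q.eval z‖ ^ 2 with hNz
  have hNznn : 0 ≤ Nz := by positivity
  -- bound on the image row
  have himg : (∑ k, ‖(y ᵥ* S) k‖ ^ 2) ≤ G * Nz := by
    have hterm : ∀ k : Fin (m + n + 2), ‖(y ᵥ* S) k‖ ^ 2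
        = if (k : ℕ) ≤ m then (‖z‖ ^ 2) ^ (k : ℕ) * ‖q.eval z‖ ^ 2
          else (‖z‖ ^ 2) ^ ((k : ℕ) - (m + 1)) * ‖p.eval z‖ ^ 2 := by
      intro k
      rw [hy, row_eval hp hq z k]
      by_cases hk : (k : ℕ) ≤ m
      · rw [if_pos hk, if_pos hk]
        simp only [norm_mul, norm_pow]
        ring
      · rw [if_neg hk, if_neg hk, norm_neg]
        simp only [norm_mul, norm_pow]
        ring
    have hsplit : (∑ k, ‖(y ᵥ* S) k‖ ^ 2)
        = (∑ k ∈ range (m + 1), (‖z‖ ^ 2) ^ k) * ‖q.eval z‖ ^ 2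
          + (∑ k ∈ range (n + 1), (‖z‖ ^ 2) ^ k) * ‖p.eval z‖ ^ 2 := by
      rw [Finset.sum_congr rfl (fun k _ => hterm k)]
      rw [Fin.sum_univ_eq_sum_range (fun k =>
        if k ≤ m then (‖z‖ ^ 2) ^ k * ‖q.eval z‖ ^ 2
        else (‖z‖ ^ 2) ^ (k - (m + 1)) * ‖p.eval z‖ ^ 2)]
      rw [show m + n + 2 = (m + 1) + (n + 1) by ring, Finset.sum_range_add]
      congr 1
      · rw [Finset.sum_mul]
        apply Finset.sum_congr rfl
        intro k hk
        simp only [Finset.mem_range] at hk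
        rw [if_pos (by omega)]
      · rw [Finset.sum_mul]
        apply Finset.sum_congr rfl
        intro k hk
        simp only [Finset.mem_range] at hk
        rw [if_neg (by omega)]
        congr 2
        omega
    rw [hsplit]
    have hGalt : G = ∑ j ∈ range (m + n + 1), (‖z‖ ^ 2) ^ j := by
      rw [hG, ← Fin.sum_univ_eq_sum_range (fun j => (‖z‖ ^ 2) ^ j) (m + n + 1)]
      apply Finset.sum_congr rfl
      intro j _
      rw [hy]
      simp only [norm_pow]
      rw [← pow_mul, ← pow_mul, mul_comm]
    have hpart : ∀ N : ℕ, N + 1 ≤ m + n + 1 →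
        (∑ k ∈ range (N + 1), (‖z‖ ^ 2) ^ k) ≤ G := by
      intro N hN
      rw [hGalt]
      apply Finset.sum_le_sum_of_subset_of_nonneg (Finset.range_subset_range.2 hN)
      intro i _ _
      positivity
    have h1 := hpart m (by omega)
    have h2 := hpart n (by omega)
    nlinarith [sq_nonneg (‖p.eval z‖), sq_nonneg (‖q.eval z‖)]
  -- main chain
  have hchain : Real.sqrt G ≤ specNorm (pinv S) * (Real.sqrt G * Real.sqrt Nz) := by
    calc Real.sqrt G = Real.sqrt (∑ j, ‖y j‖ ^ 2) := by rw [hG]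
      _ = Real.sqrt (∑ j, ‖(((y ᵥ* S) ᵥ* pinv S)) j‖ ^ 2) := by rw [← hyinv]
      _ ≤ specNorm (pinv S) * Real.sqrt (∑ k, ‖(y ᵥ* S) k‖ ^ 2) :=
          vecMul_norm_le (pinv S) (y ᵥ* S)
      _ ≤ specNorm (pinv S) * (Real.sqrt G * Real.sqrt Nz) := by
          apply mul_le_mul_of_nonneg_left _ (specNorm_nonneg' _)
          rw [← Real.sqrt_mul (by positivity)]
          exact Real.sqrt_le_sqrt himg
  have hGpos : 0 < Real.sqrt G := Real.sqrt_pos.2 (by linarith)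
  have hG1' : 1 ≤ Real.sqrt G := by
    rw [show (1:ℝ) = Real.sqrt 1 by simp]
    exact Real.sqrt_le_sqrt hG1
  nlinarith [specNorm_nonneg' (pinv S), Real.sqrt_nonneg Nz]

end RowLemmas

set_option maxHeartbeats 2000000

/-- if `r = p/q` is nondegenerate and normalized and `r̃ = u/v` is
meromorphic on the closed unit disk with `χ_𝔻(r, r̃) ≤ 1/3`, then any zero `σ` and pole `τ`
of `r̃` in the closed disk satisfy `|σ - τ| ≥ 1/(3√2 (m+n+1)^{3/2} κ(S))`. -/
theorem froissart_doublet_separation (m n : ℕ) (p q : Polynomial ℂ)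
    (hp : p.natDegree ≤ m) (hq : q.natDegree ≤ n)
    (hco : IsCoprime p q) (hlead : p.coeff m ≠ 0 ∨ q.coeff n ≠ 0)
    (hnorm : coeffNorm2 m n p q = 1)
    (u v : ℂ → ℂ)
    (hu : AnalyticOnNhd ℂ u (Metric.closedBall 0 1))
    (hv : AnalyticOnNhd ℂ v (Metric.closedBall 0 1))
    (huv : ∀ z ∈ Metric.closedBall (0 : ℂ) 1, (u z, v z) ≠ (0, 0))
    (hclose : ∀ z ∈ Metric.closedBall (0 : ℂ) 1,
      chord (p.eval z) (q.eval z) (u z) (v z) ≤ 1 / 3)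
    (σ τ : ℂ) (hσ : ‖σ‖ ≤ 1) (hτ : ‖τ‖ ≤ 1)
    (hzero : u σ = 0) (hzero' : v σ ≠ 0) (hpole : v τ = 0) (hpole' : u τ ≠ 0) :
    ‖σ - τ‖ ≥
      1 / (3 * Real.sqrt 2 * (m + n + 1 : ℝ) ^ ((3 : ℝ) / 2) * condS m n p q) := by
  classical
  set S := sylv m n p q with hS
  by_cases hinv : IsUnit (S * Sᴴ).det
  · -- invertible case
    have habs : ∀ z : ℂ, z ∈ Metric.closedBall (0:ℂ) 1 → ‖z‖ ≤ 1 := by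
      intro z hz1
      simpa [Metric.mem_closedBall, Complex.dist_eq] using hz1
    have hmemσ : σ ∈ Metric.closedBall (0:ℂ) 1 := by
      simp only [Metric.mem_closedBall, Complex.dist_eq, sub_zero]
      exact hσ
    have hmemτ : τ ∈ Metric.closedBall (0:ℂ) 1 := by
      simp only [Metric.mem_closedBall, Complex.dist_eq, sub_zero]
      exact hτ
    set a := p.eval σ with ha'
    set b := q.eval σ with hb'
    set c := p.eval τ with hc'
    set d := q.eval τ with hd'
    set Nσ : ℝ := ‖a‖ ^ 2 + ‖b‖ ^ 2 with hNσ
    set Nτ : ℝ := ‖c‖ ^ 2 + ‖d‖ ^ 2 with hNτ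
    set Rσ : ℝ := Real.sqrt Nσ with hRσ
    set Rτ : ℝ := Real.sqrt Nτ with hRτ
    set Ns : ℝ := specNorm S with hNs
    set Np : ℝ := specNorm (pinv S) with hNp
    have hNsnn : 0 ≤ Ns := specNorm_nonneg' _
    have hNpnn : 0 ≤ Np := specNorm_nonneg' _
    have hlowσ : 1 ≤ Rσ * Np := lower_bound hp hq hinv σ hσ
    have hlowτ : 1 ≤ Rτ * Np := lower_bound hp hq hinv τ hτ
    have hRσnn : 0 ≤ Rσ := Real.sqrt_nonneg _
    have hRτnn : 0 ≤ Rτ := Real.sqrt_nonneg _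
    have hRσpos : 0 < Rσ := by
      rcases hRσnn.lt_or_eq with h | h
      · exact h
      · exfalso; rw [← h, zero_mul] at hlowσ; linarith
    have hRτpos : 0 < Rτ := by
      rcases hRτnn.lt_or_eq with h | h
      · exact h
      · exfalso; rw [← h, zero_mul] at hlowτ; linarith
    -- extraction at σ
    have hcσ := hclose σ hmemσ
    have e1 : Real.sqrt (‖u σ‖ ^ 2 + ‖v σ‖ ^ 2)
        = ‖v σ‖ := by
      rw [hzero]
      simp [Real.sqrt_sq (norm_nonneg (v σ))]
    have e2 : ‖a * v σ - u σ * b‖ = ‖a‖ * ‖v σ‖ := by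
      rw [hzero]
      simp [norm_mul]
    unfold chord at hcσ
    rw [← ha', ← hb', e1, e2, ← hRσ] at hcσ
    have hvpos : 0 < ‖v σ‖ := norm_pos_iff.mpr hzero'
    rw [div_le_iff₀ (by positivity)] at hcσ
    have hA : ‖a‖ ≤ Rσ / 3 := by
      apply le_of_mul_le_mul_right _ hvpos
      calc ‖a‖ * ‖v σ‖ ≤ 1 / 3 * (Rσ * ‖v σ‖) := hcσ
        _ = Rσ / 3 * ‖v σ‖ := by ring
    -- extraction at τ
    have hcτ := hclose τ hmemτ
    have e3 : Real.sqrt (‖u τ‖ ^ 2 + ‖v τ‖ ^ 2)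
        = ‖u τ‖ := by
      rw [hpole]
      simp [Real.sqrt_sq (norm_nonneg (u τ))]
    have e4 : ‖c * v τ - u τ * d‖ = ‖u τ‖ * ‖d‖ := by
      rw [hpole]
      simp [norm_mul]
    unfold chord at hcτ
    rw [← hc', ← hd', e3, e4, ← hRτ] at hcτ
    have hupos : 0 < ‖u τ‖ := norm_pos_iff.mpr hpole'
    rw [div_le_iff₀ (by positivity)] at hcτ
    have hD : ‖d‖ ≤ Rτ / 3 := by
      apply le_of_mul_le_mul_right _ hupos
      calc ‖d‖ * ‖u τ‖ = ‖u τ‖ * ‖d‖ :=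
            mul_comm _ _
        _ ≤ 1 / 3 * (Rτ * ‖u τ‖) := hcτ
        _ = Rτ / 3 * ‖u τ‖ := by ring
    have hB : ‖b‖ ≤ Rσ := by
      rw [← Real.sqrt_sq (norm_nonneg b), hRσ, hNσ]
      exact Real.sqrt_le_sqrt (le_add_of_nonneg_left (sq_nonneg _))
    have hC : ‖c‖ ≤ Rτ := by
      rw [← Real.sqrt_sq (norm_nonneg c), hRτ, hNτ]
      exact Real.sqrt_le_sqrt (le_add_of_nonneg_right (sq_nonneg _))
    -- chordal triangle inequality : |ad - cb| ≥ Rσ Rτ / 3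
    have hkey : Rσ * Rτ ≤ ‖a * d - c * b‖
        + ‖a‖ * ‖c‖ + ‖b‖ * ‖d‖ := by
      have h5 : Rσ * Rτ = Real.sqrt (Nσ * Nτ) := (Real.sqrt_mul (by positivity) _).symm
      rw [h5, hNσ, hNτ, lagrange_id a b c d]
      have h6 := sqrt_sq_add_sq_le (‖a * d - c * b‖)
        (‖a * (starRingEnd ℂ) c + b * (starRingEnd ℂ) d‖)
        (norm_nonneg _) (norm_nonneg _)
      have h7 : ‖a * (starRingEnd ℂ) c + b * (starRingEnd ℂ) d‖
          ≤ ‖a‖ * ‖c‖ + ‖b‖ * ‖d‖ := by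
        refine (norm_add_le _ _).trans ?_
        simp [norm_mul, Complex.norm_conj]
      linarith [h6]
    have h13 : Rσ * Rτ / 3 ≤ ‖a * d - c * b‖ := by
      have t1 : ‖a‖ * ‖c‖ ≤ (Rσ / 3) * Rτ :=
        mul_le_mul hA hC (norm_nonneg _) (by positivity)
      have t2 : ‖b‖ * ‖d‖ ≤ Rσ * (Rτ / 3) :=
        mul_le_mul hB hD (norm_nonneg _) hRσnn
      linarith
    -- Cauchy-Schwarz step
    have hcs : ‖a * d - c * b‖
        ≤ Real.sqrt (‖a - c‖ ^ 2 + ‖b - d‖ ^ 2) * Rτ := by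
      have hid := lagrange_id (a - c) (b - d) c d
      have e5 : (a - c) * d - c * (b - d) = a * d - c * b := by ring
      rw [e5] at hid
      have h6 : ‖a * d - c * b‖ ^ 2
          ≤ (‖a - c‖ ^ 2 + ‖b - d‖ ^ 2)
            * (‖c‖ ^ 2 + ‖d‖ ^ 2) := by
        linarith [hid, sq_nonneg (‖(a - c) * (starRingEnd ℂ) c
          + (b - d) * (starRingEnd ℂ) d‖)]
      calc ‖a * d - c * b‖
          = Real.sqrt (‖a * d - c * b‖ ^ 2) :=
            (Real.sqrt_sq (norm_nonneg _)).symm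
        _ ≤ Real.sqrt ((‖a - c‖ ^ 2 + ‖b - d‖ ^ 2)
            * (‖c‖ ^ 2 + ‖d‖ ^ 2)) :=
            Real.sqrt_le_sqrt h6
        _ = Real.sqrt (‖a - c‖ ^ 2 + ‖b - d‖ ^ 2) * Rτ := by
            rw [Real.sqrt_mul (by positivity), hRτ, hNτ]
    -- mean value step
    set L : ℝ := ((m : ℝ) + n + 1) ^ ((3 : ℝ) / 2) with hL
    set M : ℝ := L * Ns with hM
    have hLnn : 0 ≤ L := Real.rpow_nonneg (by positivity) _
    have hMnn : 0 ≤ M := mul_nonneg hLnn hNsnn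
    have hdp : ∀ z ∈ Metric.closedBall (0:ℂ) 1,
        ‖(Polynomial.derivative p).eval z‖ ≤ M := fun z hz1 =>
      (deriv_bound hp hq z (habs z hz1)).1
    have hdq : ∀ z ∈ Metric.closedBall (0:ℂ) 1,
        ‖(Polynomial.derivative q).eval z‖ ≤ M := fun z hz1 =>
      (deriv_bound hp hq z (habs z hz1)).2
    have hmp : ‖a - c‖ ≤ M * ‖σ - τ‖ :=
      poly_lip p M hdp hmemτ hmemσ
    have hmq : ‖b - d‖ ≤ M * ‖σ - τ‖ :=
      poly_lip q M hdq hmemτ hmemσ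
    have h7 : Real.sqrt (‖a - c‖ ^ 2 + ‖b - d‖ ^ 2)
        ≤ Real.sqrt 2 * (M * ‖σ - τ‖) := by
      have h8 : ‖a - c‖ ^ 2 + ‖b - d‖ ^ 2
          ≤ 2 * (M * ‖σ - τ‖) ^ 2 := by
        have s1 : ‖a - c‖ ^ 2 ≤ (M * ‖σ - τ‖) ^ 2 :=
          pow_le_pow_left₀ (norm_nonneg _) hmp 2
        have s2 : ‖b - d‖ ^ 2 ≤ (M * ‖σ - τ‖) ^ 2 :=
          pow_le_pow_left₀ (norm_nonneg _) hmq 2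
        linarith
      calc Real.sqrt (‖a - c‖ ^ 2 + ‖b - d‖ ^ 2)
          ≤ Real.sqrt (2 * (M * ‖σ - τ‖) ^ 2) := Real.sqrt_le_sqrt h8
        _ = Real.sqrt 2 * (M * ‖σ - τ‖) := by
            rw [Real.sqrt_mul (by norm_num), Real.sqrt_sq (by positivity)]
    -- combine
    have h9 : Rσ * Rτ / 3 ≤ Real.sqrt 2 * (M * ‖σ - τ‖) * Rτ :=
      h13.trans (hcs.trans (mul_le_mul_of_nonneg_right h7 hRτnn))
    have h10 : Rσ ≤ 3 * (Real.sqrt 2 * (M * ‖σ - τ‖)) := by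
      apply le_of_mul_le_mul_right _ hRτpos
      linarith [h9]
    have h11 : 1 ≤ 3 * (Real.sqrt 2 * (M * ‖σ - τ‖)) * Np :=
      hlowσ.trans (mul_le_mul_of_nonneg_right h10 hNpnn)
    have hcond : condS m n p q = Ns * Np := rfl
    have hprod : 0 < 3 * (Real.sqrt 2 * (M * ‖σ - τ‖)) * Np :=
      zero_lt_one.trans_le h11
    have habsστ : 0 < ‖σ - τ‖ := by
      rcases (norm_nonneg (σ - τ)).lt_or_eq with h | h
      · exact h
      · exfalso; rw [← h] at hprod; simp at hprod
    have hDt : 1 ≤ 3 * Real.sqrt 2 * L * (Ns * Np) * ‖σ - τ‖ := by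
      calc (1:ℝ) ≤ 3 * (Real.sqrt 2 * (M * ‖σ - τ‖)) * Np := h11
        _ = 3 * Real.sqrt 2 * L * (Ns * Np) * ‖σ - τ‖ := by rw [hM]; ring
    have hDpos : 0 < 3 * Real.sqrt 2 * L * (Ns * Np) := by
      by_contra hcon
      push_neg at hcon
      have h20 := mul_le_mul_of_nonneg_right hcon (norm_nonneg (σ - τ))
      rw [zero_mul] at h20
      linarith [hDt]
    rw [ge_iff_le, hcond, div_le_iff₀ hDpos]
    linarith [hDt]
  · -- degenerate case : pseudoinverse is zero
    have hp0 : pinv S = 0 := by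
      unfold pinv
      rw [Matrix.nonsing_inv_apply_not_isUnit _ hinv, Matrix.mul_zero]
    have hc0 : condS m n p q = 0 := by
      unfold condS
      rw [← hS, hp0]
      have h0 : specNorm (0 : Matrix (Fin (m + n + 2)) (Fin (m + n + 1)) ℂ) = 0 := by
        rw [specNorm_eq]; exact norm_zero
      rw [h0, mul_zero]
    rw [hc0, mul_zero, div_zero]
    exact norm_nonneg _
end
end

section
/- Let r = p/q ∈ R_{m,n} be a nondegenerate rational function with normalized coefficient vector, and suppose z₀ in the closed unit disk is a simple pole of r with residue α₀ = p(z₀)/q'(z₀). Then |α₀| ≥ 1/(√2·(m+n+1)^{3/2}·κ(S)), where S = S(q,-p). -/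
noncomputable section
open Matrix Finset Polynomial

open scoped ComplexOrder

lemma norm_mulVec_le {a b : ℕ} (A : Matrix (Fin a) (Fin b) ℂ) (x : Fin b → ℂ) :
    Real.sqrt (∑ j, ‖(A.mulVec x) j‖ ^ 2) ≤
      specNorm A * Real.sqrt (∑ i, ‖x i‖ ^ 2) := by
  have h := (Matrix.toEuclideanLin A).toContinuousLinearMap.le_opNorm
      ((WithLp.equiv 2 (Fin b → ℂ)).symm x)
  simpa [EuclideanSpace.norm_eq, specNorm] using h

lemma col_le_specNorm {a b : ℕ} (A : Matrix (Fin a) (Fin b) ℂ) (k : Fin b) :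
    Real.sqrt (∑ j, ‖A j k‖ ^ 2) ≤ specNorm A := by
  have h := norm_mulVec_le A (Pi.single k 1)
  have h1 : ∀ j, (A.mulVec (Pi.single k 1)) j = A j k := by
    intro j
    simp [Matrix.mulVec, dotProduct, Pi.single_apply, Finset.sum_ite_eq']
  have h2 : (∑ i, ‖(Pi.single k 1 : Fin b → ℂ) i‖ ^ 2) = 1 := by
    rw [Finset.sum_eq_single k]
    · simp
    · intro i _ hi; simp [Pi.single_apply, hi]
    · simp
  simp only [h1, h2, Real.sqrt_one, mul_one] at h
  exact h

def xOf (m n : ℕ) (a b : Polynomial ℂ) : Fin (m + n + 2) → ℂ :=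
  fun k => if (k : ℕ) ≤ m then a.coeff k else b.coeff ((k : ℕ) - (m + 1))

lemma conv_part (d j : ℕ) (r a : Polynomial ℂ) (ha : a.natDegree ≤ d) :
    ∑ k ∈ range (d + 1), (if k ≤ j then r.coeff (j - k) else 0) * a.coeff k
      = (r * a).coeff j := by
  set G : ℕ → ℂ := fun k => if k ≤ j then a.coeff k * r.coeff (j - k) else 0 with hG
  have h1 : ∑ k ∈ range (d + 1), (if k ≤ j then r.coeff (j - k) else 0) * a.coeff k
      = ∑ k ∈ range (d + 1), G k := by
    refine Finset.sum_congr rfl fun k _ => ?_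
    by_cases hk : k ≤ j <;> simp [hG, hk, mul_comm]
  have h2 : ∑ k ∈ range (d + 1), G k = ∑ k ∈ range (d + j + 2), G k := by
    refine Finset.sum_subset (Finset.range_subset_range.2 (by omega)) fun k _ hk => ?_
    have hk' : d + 1 ≤ k := by simpa using hk
    by_cases hkj : k ≤ j
    · simp [hG, hkj, Polynomial.coeff_eq_zero_of_natDegree_lt (by omega : a.natDegree < k)]
    · simp [hG, hkj]
  have h3 : (r * a).coeff j = ∑ k ∈ range (j + 1), a.coeff k * r.coeff (j - k) := by
    rw [mul_comm r a, Polynomial.coeff_mul, Finset.Nat.sum_antidiagonal_eq_sum_range_succ_mk]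
  have h4 : ∑ k ∈ range (j + 1), a.coeff k * r.coeff (j - k) = ∑ k ∈ range (j + 1), G k := by
    refine Finset.sum_congr rfl fun k hk => ?_
    simp [hG, Nat.lt_succ_iff.mp (Finset.mem_range.mp hk)]
  have h5 : ∑ k ∈ range (j + 1), G k = ∑ k ∈ range (d + j + 2), G k := by
    refine Finset.sum_subset (Finset.range_subset_range.2 (by omega)) fun k _ hk => ?_
    simp [hG, show ¬ k ≤ j by simpa using hk]
  rw [h1, h2, h3, h4, h5]

lemma mulVec_xOf (m n : ℕ) (p q : Polynomial ℂ) (a b : Polynomial ℂ)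
    (ha : a.natDegree ≤ m) (hb : b.natDegree ≤ n) (j : Fin (m + n + 1)) :
    (sylv m n p q).mulVec (xOf m n a b) j = (q * a - p * b).coeff (j : ℕ) := by
  set f : ℕ → ℂ := fun k =>
    if k ≤ m then (if k ≤ (j : ℕ) then q.coeff ((j : ℕ) - k) else 0) * a.coeff k
    else (if k - (m + 1) ≤ (j : ℕ) then -p.coeff ((j : ℕ) - (k - (m + 1))) else 0)
      * b.coeff (k - (m + 1)) with hf
  have hentry : ∀ k : Fin (m + n + 2), sylv m n p q j k * xOf m n a b k = f (k : ℕ) := by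
    intro k
    by_cases hk : (k : ℕ) ≤ m <;> simp [sylv, xOf, hf, hk]
  have hmv : (sylv m n p q).mulVec (xOf m n a b) j = ∑ k ∈ range (m + n + 2), f k := by
    rw [Matrix.mulVec, dotProduct]
    rw [Finset.sum_congr rfl fun k _ => hentry k]
    exact Fin.sum_univ_eq_sum_range f (m + n + 2)
  have hsplit : ∑ k ∈ range (m + n + 2), f k
      = ∑ k ∈ range (m + 1), f k + ∑ i ∈ range (n + 1), f (m + 1 + i) := by
    nth_rewrite 1 [Finset.range_eq_Ico]
    rw [← Finset.sum_Ico_consecutive f (Nat.zero_le (m + 1)) (by omega)]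
    congr 1
    · rw [← Finset.range_eq_Ico]
    · rw [Finset.sum_Ico_eq_sum_range]
      have h9 : m + n + 2 - (m + 1) = n + 1 := by omega
      rw [h9]
  have hfirst : ∑ k ∈ range (m + 1), f k = (q * a).coeff (j : ℕ) := by
    rw [← conv_part m (j : ℕ) q a ha]
    refine Finset.sum_congr rfl fun k hk => ?_
    have : k ≤ m := Nat.lt_succ_iff.mp (Finset.mem_range.mp hk)
    simp [hf, this]
  have hsecond : ∑ i ∈ range (n + 1), f (m + 1 + i) = ((-p) * b).coeff (j : ℕ) := by
    rw [← conv_part n (j : ℕ) (-p) b hb]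
    refine Finset.sum_congr rfl fun i hi => ?_
    have h1 : ¬ m + 1 + i ≤ m := by omega
    have h2 : m + 1 + i - (m + 1) = i := by omega
    by_cases h3 : i ≤ (j : ℕ) <;> simp [hf, h1, h2, h3, Polynomial.coeff_neg, show (m + 1 + i ≤ (j:ℕ) + (m+1)) ↔ i ≤ (j:ℕ) by omega]
  rw [hmv, hsplit, hfirst, hsecond]
  simp [Polynomial.coeff_sub, neg_mul, Polynomial.coeff_neg, sub_eq_add_neg]

lemma reduce_poly (r s c : Polynomial ℂ) (dr ds : ℕ) (hr : r.natDegree = dr) (hr0 : r ≠ 0)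
    (hs : s.natDegree ≤ ds) (hc : c.natDegree ≤ dr + ds)
    (a₀ b₀ : Polynomial ℂ) (h : r * a₀ + s * b₀ = c) :
    ∃ A B : Polynomial ℂ, A.natDegree ≤ ds ∧ B.natDegree ≤ dr ∧ r * A + s * B = c := by
  set L := r.leadingCoeff with hL
  have hL0 : L ≠ 0 := Polynomial.leadingCoeff_ne_zero.mpr hr0
  set r1 := r * Polynomial.C L⁻¹ with hr1
  have hmon : r1.Monic := Polynomial.monic_mul_leadingCoeff_inv hr0
  set B := b₀ %ₘ r1 with hB
  set t := b₀ /ₘ r1 with ht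
  have hmod : B + r1 * t = b₀ := Polynomial.modByMonic_add_div b₀ r1
  have hdegr1 : r1.degree = r.degree := by
    rw [hr1, Polynomial.degree_mul_C (inv_ne_zero hL0)]
  have hBdeg : B.natDegree ≤ dr := by
    have h1 : B.degree < r1.degree := Polynomial.degree_modByMonic_lt b₀ hmon
    have h2 : B.degree < (dr : WithBot ℕ) := by
      rw [hdegr1, Polynomial.degree_eq_natDegree hr0, hr] at h1
      exact_mod_cast h1
    exact Polynomial.natDegree_le_iff_degree_le.mpr (le_of_lt h2)
  refine ⟨a₀ + s * (Polynomial.C L⁻¹ * t), B, ?_, hBdeg, ?_⟩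
  · set A := a₀ + s * (Polynomial.C L⁻¹ * t) with hA
    by_cases hA0 : A = 0
    · simp [hA0]
    · have hrA : r * A = c - s * B := by
        rw [hA]
        have : r * (Polynomial.C L⁻¹ * t) = r1 * t := by rw [hr1]; ring
        calc r * (a₀ + s * (Polynomial.C L⁻¹ * t))
            = r * a₀ + s * (r * (Polynomial.C L⁻¹ * t)) := by ring
          _ = r * a₀ + s * (b₀ - B) := by rw [this]; rw [← hmod]; ring_nf
          _ = c - s * B := by rw [← h]; ring
      have h1 : (r * A).natDegree = dr + A.natDegree := by
        rw [Polynomial.natDegree_mul hr0 hA0, hr]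
      have h2 : (c - s * B).natDegree ≤ dr + ds := by
        refine le_trans (Polynomial.natDegree_sub_le _ _) (max_le hc ?_)
        refine le_trans (Polynomial.natDegree_mul_le) (by omega)
      rw [hrA] at h1
      omega
  · have : r * (Polynomial.C L⁻¹ * t) = r1 * t := by rw [hr1]; ring
    calc r * (a₀ + s * (Polynomial.C L⁻¹ * t)) + s * B
        = r * a₀ + s * (r * (Polynomial.C L⁻¹ * t) + B) := by ring
      _ = r * a₀ + s * (r1 * t + B) := by rw [this]
      _ = r * a₀ + s * b₀ := by rw [← hmod]; ring_nf
      _ = c := h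

lemma exists_ab (m n : ℕ) (p q : Polynomial ℂ) (hp : p.natDegree ≤ m) (hq : q.natDegree ≤ n)
    (hco : IsCoprime p q) (hlead : p.coeff m ≠ 0 ∨ q.coeff n ≠ 0)
    (c : Polynomial ℂ) (hc : c.natDegree ≤ m + n) :
    ∃ a b : Polynomial ℂ, a.natDegree ≤ m ∧ b.natDegree ≤ n ∧ q * a - p * b = c := by
  obtain ⟨u, v, huv⟩ := hco
  rcases hlead with hpm | hqn
  · have hdp : p.natDegree = m := le_antisymm hp (Polynomial.le_natDegree_of_ne_zero hpm)
    have hp0 : p ≠ 0 := fun h => hpm (by simp [h])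
    have hdnp : (-p).natDegree = m := by rwa [Polynomial.natDegree_neg]
    have hnp0 : (-p) ≠ 0 := neg_ne_zero.mpr hp0
    have hdec : (-p) * (-(c * u)) + q * (c * v) = c := by linear_combination c * huv
    obtain ⟨A, B, hA, hB, hAB⟩ := reduce_poly (-p) q c m n hdnp hnp0 hq
      (by omega) (-(c * u)) (c * v) hdec
    exact ⟨B, A, hB, hA, by linear_combination hAB⟩
  · have hdq : q.natDegree = n := le_antisymm hq (Polynomial.le_natDegree_of_ne_zero hqn)
    have hq0 : q ≠ 0 := fun h => hqn (by simp [h])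
    have hdec : q * (c * v) + (-p) * (-(c * u)) = c := by linear_combination c * huv
    obtain ⟨A, B, hA, hB, hAB⟩ := reduce_poly q (-p) c n m hdq hq0
      (by rwa [Polynomial.natDegree_neg]) (by omega) (c * v) (-(c * u)) hdec
    exact ⟨A, B, hA, hB, by linear_combination hAB⟩

lemma sylv_surj (m n : ℕ) (p q : Polynomial ℂ) (hp : p.natDegree ≤ m) (hq : q.natDegree ≤ n)
    (hco : IsCoprime p q) (hlead : p.coeff m ≠ 0 ∨ q.coeff n ≠ 0) :
    Function.Surjective (sylv m n p q).mulVec := by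
  intro w
  set c : Polynomial ℂ := ∑ j : Fin (m + n + 1), Polynomial.monomial (j : ℕ) (w j) with hc
  have hcdeg : c.natDegree ≤ m + n := by
    refine Polynomial.natDegree_sum_le_of_forall_le _ _ fun j _ => ?_
    exact le_trans (Polynomial.natDegree_monomial_le _) (by omega)
  have hcoeff : ∀ j : Fin (m + n + 1), c.coeff (j : ℕ) = w j := by
    intro j
    rw [hc, Polynomial.finset_sum_coeff, Finset.sum_eq_single j]
    · simp
    · intro i _ hi
      rw [Polynomial.coeff_monomial, if_neg (fun h => hi (Fin.ext h))]
    · simp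
  obtain ⟨a, b, ha, hb, hab⟩ := exists_ab m n p q hp hq hco hlead c hcdeg
  refine ⟨xOf m n a b, funext fun j => ?_⟩
  rw [mulVec_xOf m n p q a b ha hb j, hab]
  exact hcoeff j

lemma sylv_isUnit (m n : ℕ) (p q : Polynomial ℂ) (hp : p.natDegree ≤ m) (hq : q.natDegree ≤ n)
    (hco : IsCoprime p q) (hlead : p.coeff m ≠ 0 ∨ q.coeff n ≠ 0) :
    IsUnit (sylv m n p q * (sylv m n p q)ᴴ) := by
  set S := sylv m n p q with hS
  rw [← Matrix.mulVec_injective_iff_isUnit]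
  have key : ∀ x, (S * Sᴴ).mulVec x = 0 → x = 0 := by
    intro x hx
    have hSx : Sᴴ.mulVec x = 0 := by
      have h1 : star x ⬝ᵥ ((S * Sᴴ).mulVec x) = 0 := by rw [hx, dotProduct_zero]
      have h2 : star x ⬝ᵥ ((S * Sᴴ).mulVec x) = star (Sᴴ.mulVec x) ⬝ᵥ (Sᴴ.mulVec x) := by
        rw [← Matrix.mulVec_mulVec, Matrix.dotProduct_mulVec, Matrix.star_mulVec,
          Matrix.conjTranspose_conjTranspose]
      rw [h2] at h1
      exact dotProduct_star_self_eq_zero.mp h1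
    obtain ⟨y, hy⟩ := sylv_surj m n p q hp hq hco hlead x
    rw [← hS] at hy
    have h3 : star x ⬝ᵥ x = 0 := by
      calc star x ⬝ᵥ x = star x ⬝ᵥ (S *ᵥ y) := by rw [hy]
        _ = (star x ᵥ* S) ⬝ᵥ y := Matrix.dotProduct_mulVec _ _ _
        _ = star (Sᴴ *ᵥ x) ⬝ᵥ y := by
            rw [Matrix.star_mulVec, Matrix.conjTranspose_conjTranspose]
        _ = 0 := by rw [hSx]; simp
    exact dotProduct_star_self_eq_zero.mp h3
  intro x y hxy
  have := key (x - y) (by rw [Matrix.mulVec_sub, hxy, sub_self])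
  exact sub_eq_zero.mp this

lemma rpow_three_halves {x : ℝ} (hx : 0 ≤ x) : x ^ ((3:ℝ)/2) = Real.sqrt (x ^ 3) := by
  rw [Real.sqrt_eq_rpow, show (3:ℝ)/2 = 3 * (1/2) by ring, Real.rpow_mul hx]
  congr 1
  rw [show (3:ℝ) = ((3:ℕ):ℝ) by norm_num, Real.rpow_natCast]

lemma deriv_eval_bound (n : ℕ) (q : Polynomial ℂ) (hq : q.natDegree ≤ n) (z : ℂ)
    (hz : ‖z‖ ≤ 1)
    (hQ : ∑ j ∈ range (n+1), ‖q.coeff j‖ ^ 2 ≤ 1) :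
    ‖q.derivative.eval z‖ ≤ Real.sqrt (((n:ℝ)+1) ^ 3) := by
  have hd : q.derivative.natDegree < n + 1 := by
    have h0 := Polynomial.natDegree_derivative_le q
    omega
  rw [Polynomial.eval_eq_sum_range' hd]
  have step1 : ‖∑ i ∈ range (n+1), q.derivative.coeff i * z ^ i‖
      ≤ ∑ i ∈ range (n+1), ((i:ℝ)+1) * ‖q.coeff (i+1)‖ := by
    refine le_trans (norm_sum_le _ _) (Finset.sum_le_sum fun i _ => ?_)
    rw [norm_mul, norm_pow, Polynomial.coeff_derivative, norm_mul]
    have h1 : ‖z‖ ^ i ≤ 1 := pow_le_one₀ (norm_nonneg z) hz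
    have h2 : ‖(i:ℂ) + 1‖ = (i:ℝ) + 1 := by
      rw [show ((i:ℂ)+1) = (((i+1:ℕ)):ℂ) by push_cast; ring, Complex.norm_natCast]
      push_cast; ring
    rw [h2]
    calc ‖q.coeff (i+1)‖ * ((i:ℝ)+1) * ‖z‖ ^ i
        ≤ ‖q.coeff (i+1)‖ * ((i:ℝ)+1) * 1 := by
          refine mul_le_mul_of_nonneg_left h1 (by positivity)
      _ = ((i:ℝ)+1) * ‖q.coeff (i+1)‖ := by ring
  refine le_trans step1 ?_
  refine le_trans (Real.sum_mul_le_sqrt_mul_sqrt _ _ _) ?_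
  have hA : ∑ i ∈ range (n+1), ((i:ℝ)+1)^2 ≤ ((n:ℝ)+1)^3 := by
    calc ∑ i ∈ range (n+1), ((i:ℝ)+1)^2 ≤ ∑ _i ∈ range (n+1), ((n:ℝ)+1)^2 := by
          refine Finset.sum_le_sum fun i hi => ?_
          have h9 := Finset.mem_range.mp hi
          have : (i:ℝ) + 1 ≤ (n:ℝ) + 1 := by
            have : (i:ℝ) ≤ (n:ℝ) := by exact_mod_cast Nat.lt_succ_iff.mp h9
            linarith
          exact pow_le_pow_left₀ (by positivity) this 2
      _ = ((n:ℝ)+1)^3 := by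
          rw [Finset.sum_const, Finset.card_range, nsmul_eq_mul]; push_cast; ring
  have hB : ∑ i ∈ range (n+1), ‖q.coeff (i+1)‖ ^ 2 ≤ 1 := by
    have e1 : ∑ i ∈ range (n+1), ‖q.coeff (i+1)‖ ^ 2
        = ∑ j ∈ Finset.Ico 1 (n+2), ‖q.coeff j‖ ^ 2 := by
      rw [Finset.sum_Ico_eq_sum_range]
      have : n + 2 - 1 = n + 1 := by omega
      rw [this]
      exact Finset.sum_congr rfl fun i _ => by rw [add_comm 1 i]
    have e2 : ∑ j ∈ Finset.Ico 1 (n+2), ‖q.coeff j‖ ^ 2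
        ≤ ∑ j ∈ range (n+2), ‖q.coeff j‖ ^ 2 := by
      refine Finset.sum_le_sum_of_subset_of_nonneg ?_ (fun _ _ _ => by positivity)
      rw [Finset.range_eq_Ico]
      exact Finset.Ico_subset_Ico (by omega) le_rfl
    have e3 : ∑ j ∈ range (n+2), ‖q.coeff j‖ ^ 2
        = ∑ j ∈ range (n+1), ‖q.coeff j‖ ^ 2 := by
      rw [Finset.sum_range_succ, Polynomial.coeff_eq_zero_of_natDegree_lt (by omega)]
      simp
    rw [e1]; exact le_trans e2 (by rw [e3]; exact hQ)
  calc Real.sqrt (∑ i ∈ range (n+1), ((i:ℝ)+1)^2)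
        * Real.sqrt (∑ i ∈ range (n+1), ‖q.coeff (i+1)‖ ^ 2)
      ≤ Real.sqrt (((n:ℝ)+1)^3) * Real.sqrt 1 := by
        exact mul_le_mul (Real.sqrt_le_sqrt hA) (Real.sqrt_le_sqrt hB)
          (Real.sqrt_nonneg _) (Real.sqrt_nonneg _)
    _ = Real.sqrt (((n:ℝ)+1)^3) := by rw [Real.sqrt_one, mul_one]


/-- for a nondegenerate normalized `r = p/q ∈ R_{m,n}` with a simple pole
`z₀` in the closed unit disk, the residue `α₀ = p(z₀)/q'(z₀)` satisfies
`|α₀| ≥ 1/(√2 (m+n+1)^{3/2} κ(S))`. -/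
theorem residue_lower_bound (m n : ℕ) (p q : Polynomial ℂ)
    (hp : p.natDegree ≤ m) (hq : q.natDegree ≤ n)
    (hco : IsCoprime p q) (hlead : p.coeff m ≠ 0 ∨ q.coeff n ≠ 0)
    (hnorm : coeffNorm2 m n p q = 1)
    (z₀ : ℂ) (hz₀ : ‖z₀‖ ≤ 1)
    (hpole : q.eval z₀ = 0) (hsimple : q.derivative.eval z₀ ≠ 0) (hnum : p.eval z₀ ≠ 0) :
    ‖p.eval z₀ / q.derivative.eval z₀‖ ≥
      1 / (Real.sqrt 2 * (m + n + 1 : ℝ) ^ ((3 : ℝ) / 2) * condS m n p q) := by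
  have hP0 : (0:ℝ) ≤ ∑ j ∈ Finset.range (m + 1), ‖p.coeff j‖ ^ 2 :=
    Finset.sum_nonneg fun _ _ => by positivity
  have hQ0 : (0:ℝ) ≤ ∑ j ∈ Finset.range (n + 1), ‖q.coeff j‖ ^ 2 :=
    Finset.sum_nonneg fun _ _ => by positivity
  have hPQ : (∑ j ∈ Finset.range (m + 1), ‖p.coeff j‖ ^ 2)
      + (∑ j ∈ Finset.range (n + 1), ‖q.coeff j‖ ^ 2) = 1 := hnorm
  set S := sylv m n p q with hS
  set σ := specNorm S with hσdef
  set τ := specNorm (pinv S) with hτdef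
  have hσ0 : 0 ≤ σ := norm_nonneg _
  have hτ0 : 0 ≤ τ := norm_nonneg _
  set t := ‖z₀‖ with ht
  set T : ℝ := ∑ j ∈ range (m+n+1), (t ^ j) ^ 2 with hT
  have hT0 : 0 ≤ T := Finset.sum_nonneg fun _ _ => by positivity
  have hT1 : 1 ≤ T := by
    have := Finset.single_le_sum (f := fun j => (t ^ j) ^ 2)
      (fun i _ => by positivity) (Finset.mem_range.mpr (by omega : 0 < m+n+1))
    simpa using this
  -- the vector w and solution x
  set w : Fin (m+n+1) → ℂ := fun j => (starRingEnd ℂ) (z₀ ^ (j:ℕ)) with hw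
  have hwnorm : ∑ j : Fin (m+n+1), ‖w j‖ ^ 2 = T := by
    rw [hT, ← Fin.sum_univ_eq_sum_range (fun j => (t ^ j) ^ 2) (m+n+1)]
    exact Finset.sum_congr rfl fun j _ => by simp [hw, ht, map_pow]
  have hunit := sylv_isUnit m n p q hp hq hco hlead
  set x : Fin (m+n+2) → ℂ := (pinv S).mulVec w with hx
  have hSx : S.mulVec x = w := by
    rw [hx, Matrix.mulVec_mulVec,
      show S * pinv S = 1 by
        rw [pinv, ← Matrix.mul_assoc,
          Matrix.mul_nonsing_inv _ ((Matrix.isUnit_iff_isUnit_det _).mp hunit)],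
      Matrix.one_mulVec]
  have hxnorm : Real.sqrt (∑ k : Fin (m+n+2), ‖x k‖ ^ 2)
      ≤ τ * Real.sqrt T := by
    have h := norm_mulVec_le (pinv S) w
    rw [hwnorm] at h
    exact h
  -- polynomials a, b from x
  set a : Polynomial ℂ :=
    ∑ k : Fin (m+1), Polynomial.monomial (k:ℕ) (x ⟨(k:ℕ), by omega⟩) with ha'
  set b : Polynomial ℂ :=
    ∑ i : Fin (n+1), Polynomial.monomial (i:ℕ) (x ⟨m+1+(i:ℕ), by omega⟩) with hb'
  have ha : a.natDegree ≤ m := by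
    refine Polynomial.natDegree_sum_le_of_forall_le _ _ fun k _ => ?_
    exact le_trans (Polynomial.natDegree_monomial_le _) (by omega)
  have hb : b.natDegree ≤ n := by
    refine Polynomial.natDegree_sum_le_of_forall_le _ _ fun k _ => ?_
    exact le_trans (Polynomial.natDegree_monomial_le _) (by omega)
  have hacoeff : ∀ k : ℕ, ∀ hk : k ≤ m, a.coeff k = x ⟨k, by omega⟩ := by
    intro k hk
    rw [ha', Polynomial.finset_sum_coeff,
      Finset.sum_eq_single (⟨k, by omega⟩ : Fin (m+1))]
    · simp
    · intro i _ hi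
      rw [Polynomial.coeff_monomial, if_neg (fun h => hi (Fin.ext h))]
    · simp
  have hbcoeff : ∀ k : ℕ, ∀ hk : k ≤ n, b.coeff k = x ⟨m+1+k, by omega⟩ := by
    intro k hk
    rw [hb', Polynomial.finset_sum_coeff,
      Finset.sum_eq_single (⟨k, by omega⟩ : Fin (n+1))]
    · simp
    · intro i _ hi
      rw [Polynomial.coeff_monomial, if_neg (fun h => hi (Fin.ext h))]
    · simp
  have hxeq : xOf m n a b = x := by
    funext k
    by_cases hk : (k:ℕ) ≤ m
    · rw [xOf, if_pos hk, hacoeff (k:ℕ) hk]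
    · have hk2 : (k:ℕ) - (m+1) ≤ n := by have := k.isLt; omega
      rw [xOf, if_neg hk, hbcoeff _ hk2]
      exact congrArg x (Fin.ext (by simp only []; omega))
  have hcoeffw : ∀ j : Fin (m+n+1), (q*a - p*b).coeff (j:ℕ) = w j := by
    intro j
    rw [← mulVec_xOf m n p q a b ha hb j, hxeq, ← hS, hSx]
  -- evaluation identity
  have hdeg : (q*a - p*b).natDegree < m+n+1 := by
    have h1 : (q*a).natDegree ≤ n + m := le_trans Polynomial.natDegree_mul_le (by omega)
    have h2 : (p*b).natDegree ≤ m + n := le_trans Polynomial.natDegree_mul_le (by omega)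
    have h3 := Polynomial.natDegree_sub_le (q*a) (p*b)
    have h4 : max (q*a).natDegree (p*b).natDegree ≤ m+n := max_le (by omega) h2
    omega
  have heval : (T : ℂ) = - (p.eval z₀ * b.eval z₀) := by
    have e1 : (q*a - p*b).eval z₀ = ∑ j ∈ range (m+n+1), (q*a-p*b).coeff j * z₀ ^ j :=
      Polynomial.eval_eq_sum_range' hdeg z₀
    have e2 : ∀ j ∈ range (m+n+1), (q*a-p*b).coeff j * z₀ ^ j = (((t ^ j) ^ 2 : ℝ) : ℂ) := by
      intro j hj
      have hjlt := Finset.mem_range.mp hj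
      have := hcoeffw ⟨j, hjlt⟩
      rw [show ((⟨j, hjlt⟩ : Fin (m+n+1)) : ℕ) = j from rfl] at this
      rw [this, hw]
      simp only []
      rw [mul_comm, Complex.mul_conj]
      rw [Complex.normSq_eq_norm_sq]
      push_cast [norm_pow]
      ring
    have e3 : (q*a - p*b).eval z₀ = (T : ℂ) := by
      rw [e1, Finset.sum_congr rfl e2, hT]
      push_cast
      rfl
    rw [← e3]
    rw [Polynomial.eval_sub, Polynomial.eval_mul, Polynomial.eval_mul, hpole]
    ring
  have habsprod : ‖p.eval z₀‖ * ‖b.eval z₀‖ = T := by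
    have h := congrArg norm heval
    rw [Complex.norm_real, Real.norm_eq_abs, abs_of_nonneg hT0] at h
    rw [h, norm_neg, norm_mul]
  -- bound on |b(z₀)|
  have hbeval : ‖b.eval z₀‖ ≤ Real.sqrt T * (τ * Real.sqrt T) := by
    rw [Polynomial.eval_eq_sum_range' (by omega : b.natDegree < n+1)]
    have s1 : ‖∑ k ∈ range (n+1), b.coeff k * z₀ ^ k‖
        ≤ ∑ k ∈ range (n+1), t ^ k * ‖b.coeff k‖ := by
      refine le_trans (norm_sum_le _ _) (Finset.sum_le_sum fun k _ => ?_)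
      rw [norm_mul, norm_pow]
      exact le_of_eq (mul_comm _ _)
    refine le_trans s1 ?_
    refine le_trans (Real.sum_mul_le_sqrt_mul_sqrt _ _ _) ?_
    have s2 : Real.sqrt (∑ k ∈ range (n+1), (t ^ k)^2) ≤ Real.sqrt T := by
      apply Real.sqrt_le_sqrt
      rw [hT]
      exact Finset.sum_le_sum_of_subset_of_nonneg (Finset.range_subset_range.2 (by omega))
        fun _ _ _ => by positivity
    have s3 : Real.sqrt (∑ k ∈ range (n+1), ‖b.coeff k‖^2) ≤ τ * Real.sqrt T := by
      refine le_trans ?_ hxnorm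
      apply Real.sqrt_le_sqrt
      set G : ℕ → ℝ := fun j => if h : j < m+n+2 then ‖x ⟨j, h⟩‖^2 else 0 with hG
      have hGnn : ∀ j, 0 ≤ G j := by
        intro j; rw [hG]; dsimp only; split <;> positivity
      have e1 : ∑ k : Fin (m+n+2), ‖x k‖^2 = ∑ j ∈ range (m+n+2), G j := by
        rw [← Fin.sum_univ_eq_sum_range G (m+n+2)]
        refine Finset.sum_congr rfl fun k _ => ?_
        rw [hG]; dsimp only; rw [dif_pos k.isLt]
      have e2 : ∑ k ∈ range (n+1), ‖b.coeff k‖^2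
          = ∑ k ∈ range (n+1), G (m+1+k) := by
        refine Finset.sum_congr rfl fun k hk => ?_
        have hk' : k ≤ n := Nat.lt_succ_iff.mp (Finset.mem_range.mp hk)
        rw [hbcoeff k hk', hG]; dsimp only; rw [dif_pos (by omega)]
      have e3 : ∑ k ∈ range (n+1), G (m+1+k) ≤ ∑ j ∈ range (m+n+2), G j := by
        rw [show ∑ k ∈ range (n+1), G (m+1+k) = ∑ j ∈ Finset.Ico (m+1) (m+n+2), G j from
          (by rw [Finset.sum_Ico_eq_sum_range, show m+n+2-(m+1) = n+1 from by omega] :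
            ∑ j ∈ Finset.Ico (m+1) (m+n+2), G j = ∑ k ∈ range (n+1), G (m+1+k)).symm]
        refine Finset.sum_le_sum_of_subset_of_nonneg ?_ (fun j _ _ => hGnn j)
        rw [Finset.range_eq_Ico]; exact Finset.Ico_subset_Ico (by omega) le_rfl
      rw [e2, e1]; exact e3
    exact mul_le_mul s2 s3 (Real.sqrt_nonneg _) (Real.sqrt_nonneg _)
  -- |p(z₀)| τ ≥ 1
  have hpτ : 1 ≤ ‖p.eval z₀‖ * τ := by
    have h1 := mul_le_mul_of_nonneg_left hbeval (norm_nonneg (p.eval z₀))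
    rw [habsprod] at h1
    have h2 : Real.sqrt T * (τ * Real.sqrt T) = τ * T := by
      rw [show Real.sqrt T * (τ * Real.sqrt T) = τ * (Real.sqrt T * Real.sqrt T) by ring,
        Real.mul_self_sqrt hT0]
    rw [h2] at h1
    have h1 : T ≤ ‖p.eval z₀‖ * (τ * T) := h1
    have h3 : (1:ℝ) * T ≤ (‖p.eval z₀‖ * τ) * T := by
      rw [one_mul]; linarith [h1]
    exact le_of_mul_le_mul_right h3 (by linarith)
  -- spectral norm lower bound
  have hσ2 : 1 ≤ Real.sqrt 2 * σ := by
    have key : ∀ k : Fin (m+n+2), (1:ℝ)/2 ≤ ∑ j : Fin (m+n+1), ‖S j k‖^2 →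
        1 ≤ Real.sqrt 2 * σ := by
      intro k hgt
      have hcol := col_le_specNorm S k
      calc (1:ℝ) = Real.sqrt 2 * Real.sqrt (1/2) := by
            rw [← Real.sqrt_mul (by norm_num : (0:ℝ) ≤ 2)]; norm_num
        _ ≤ Real.sqrt 2 * σ :=
            mul_le_mul_of_nonneg_left (le_trans (Real.sqrt_le_sqrt hgt) hcol)
              (Real.sqrt_nonneg _)
    rcases le_total ((1:ℝ)/2) (∑ j ∈ Finset.range (m + 1), ‖p.coeff j‖ ^ 2)
      with hcase | hcase
    · refine key ⟨m+1, by omega⟩ ?_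
      have hentry : ∀ j : Fin (m+n+1),
          S j ⟨m+1, by omega⟩ = -p.coeff (j:ℕ) := by
        intro j
        show sylv m n p q j ⟨m+1, by omega⟩ = -p.coeff (j:ℕ)
        rw [sylv]
        simp
      have hsum : ∑ j : Fin (m+n+1), ‖S j ⟨m+1, by omega⟩‖^2
          = ∑ j ∈ range (m+n+1), ‖p.coeff j‖^2 := by
        rw [← Fin.sum_univ_eq_sum_range (fun j => ‖p.coeff j‖^2) (m+n+1)]
        exact Finset.sum_congr rfl fun j _ => by rw [hentry j, norm_neg]
      rw [hsum]
      exact le_trans hcase (Finset.sum_le_sum_of_subset_of_nonneg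
        (Finset.range_subset_range.2 (by omega)) fun _ _ _ => by positivity)
    · refine key ⟨0, by omega⟩ ?_
      have hentry : ∀ j : Fin (m+n+1), S j ⟨0, by omega⟩ = q.coeff (j:ℕ) := by
        intro j
        show sylv m n p q j ⟨0, by omega⟩ = q.coeff (j:ℕ)
        rw [sylv]
        simp
      have hsum : ∑ j : Fin (m+n+1), ‖S j ⟨0, by omega⟩‖^2
          = ∑ j ∈ range (m+n+1), ‖q.coeff j‖^2 := by
        rw [← Fin.sum_univ_eq_sum_range (fun j => ‖q.coeff j‖^2) (m+n+1)]
        exact Finset.sum_congr rfl fun j _ => by rw [hentry j]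
      rw [hsum]
      refine le_trans (by linarith : (1:ℝ)/2
        ≤ ∑ j ∈ Finset.range (n + 1), ‖q.coeff j‖ ^ 2) ?_
      exact Finset.sum_le_sum_of_subset_of_nonneg
        (Finset.range_subset_range.2 (by omega)) fun _ _ _ => by positivity
  -- derivative bound
  have hQle : ∑ j ∈ range (n+1), ‖q.coeff j‖^2 ≤ 1 := by linarith
  have hq' := deriv_eval_bound n q hq z₀ hz₀ hQle
  set E := ((m:ℝ) + (n:ℝ) + 1) ^ ((3:ℝ)/2) with hE
  have hEs : E = Real.sqrt (((m:ℝ)+(n:ℝ)+1)^3) := rpow_three_halves (by positivity)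
  have hβE : ‖q.derivative.eval z₀‖ ≤ E := by
    rw [hEs]
    refine le_trans hq' (Real.sqrt_le_sqrt ?_)
    have h5 : ((n:ℝ)+1) ≤ ((m:ℝ)+(n:ℝ)+1) := by
      have : (0:ℝ) ≤ (m:ℝ) := Nat.cast_nonneg m
      linarith
    exact pow_le_pow_left₀ (by positivity) h5 3
  have hE0 : 0 ≤ E := by rw [hEs]; exact Real.sqrt_nonneg _
  rw [ge_iff_le, norm_div, show condS m n p q = σ * τ from rfl]
  set α := ‖p.eval z₀‖ with hα
  set β := ‖q.derivative.eval z₀‖ with hβ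
  have hβ0 : 0 < β := norm_pos_iff.mpr hsimple
  have hα0 : 0 < α := norm_pos_iff.mpr hnum
  have hchain : β ≤ α * (Real.sqrt 2 * E * (σ * τ)) := by
    calc β = 1 * β := (one_mul β).symm
      _ ≤ (α * τ) * β := mul_le_mul_of_nonneg_right hpτ hβ0.le
      _ ≤ (α * τ) * E := mul_le_mul_of_nonneg_left hβE (mul_nonneg hα0.le hτ0)
      _ = (α * τ * E) * 1 := by ring
      _ ≤ (α * τ * E) * (Real.sqrt 2 * σ) :=
          mul_le_mul_of_nonneg_left hσ2 (by positivity)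
      _ = α * (Real.sqrt 2 * E * (σ * τ)) := by ring
  have hD0 : 0 < Real.sqrt 2 * E * (σ * τ) := by
    by_contra hD
    push_neg at hD
    have h6 : α * (Real.sqrt 2 * E * (σ * τ)) ≤ α * 0 :=
      mul_le_mul_of_nonneg_left hD hα0.le
    rw [mul_zero] at h6
    linarith
  rw [div_le_div_iff₀ hD0 hβ0]
  linarith [hchain]
end
end

section
/- Let r = p/q ∈ R_{m,n} be nondegenerate with normalized coefficient vector and S = S(q,-p). If r̃ ∈ R_{m,n} is degenerate (its numerator and denominator have a common root, or both leading coefficients vanish), then √(2(m+n+1))·d(r,r̃)·κ(S) ≥ 1. -/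
set_option maxHeartbeats 1600000

noncomputable section
open Matrix Finset Polynomial

/-- Distance of the stacked coefficient vectors of `p/q` and of `a·(p̃/q̃)` (viewed in
`R_{m,n}`, i.e. in `ℂ^{m+n+2}`). -/
def coeffDist (m n : ℕ) (p q pt qt : Polynomial ℂ) (a : ℂ) : ℝ :=
  Real.sqrt ((∑ j ∈ Finset.range (m + 1), ‖p.coeff j - a * pt.coeff j‖ ^ 2)
    + (∑ j ∈ Finset.range (n + 1), ‖q.coeff j - a * qt.coeff j‖ ^ 2))

namespace DegAux
open scoped Matrix.Norms.L2Operator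

/-! ### Norm infrastructure -/

lemma specNorm_eq {α β : Type} [Fintype α] [Fintype β] [DecidableEq α] [DecidableEq β]
    (A : Matrix α β ℂ) : specNorm A = ‖A‖ := rfl

lemma specNorm_nonneg {α β : Type} [Fintype α] [Fintype β] [DecidableEq α] [DecidableEq β]
    (A : Matrix α β ℂ) : 0 ≤ specNorm A := norm_nonneg _

lemma specNorm_conjTranspose {α β : Type} [Fintype α] [Fintype β] [DecidableEq α] [DecidableEq β]
    (A : Matrix α β ℂ) : specNorm Aᴴ = specNorm A := by
  rw [specNorm_eq, specNorm_eq, Matrix.l2_opNorm_conjTranspose]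

def enorm {k : ℕ} (v : Fin k → ℂ) : ℝ := ‖(WithLp.equiv 2 (Fin k → ℂ)).symm v‖

lemma enorm_eq {k : ℕ} (v : Fin k → ℂ) :
    enorm v = Real.sqrt (∑ i, ‖v i‖ ^ 2) := by
  simp [enorm, EuclideanSpace.norm_eq]

lemma enorm_nonneg {k : ℕ} (v : Fin k → ℂ) : 0 ≤ enorm v := norm_nonneg _

lemma enorm_pos {k : ℕ} (v : Fin k → ℂ) (hv : v ≠ 0) : 0 < enorm v := by
  refine norm_pos_iff.mpr fun h => hv ?_
  funext i
  exact congrFun (congrArg (WithLp.equiv 2 (Fin k → ℂ)) h) i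

lemma enorm_mulVec_le {a b : ℕ} (A : Matrix (Fin a) (Fin b) ℂ) (x : Fin b → ℂ) :
    enorm (A *ᵥ x) ≤ specNorm A * enorm x := by
  have h := (Matrix.toEuclideanLin A).toContinuousLinearMap.le_opNorm
    ((WithLp.equiv 2 (Fin b → ℂ)).symm x)
  simpa [enorm, specNorm, Matrix.toEuclideanLin_apply_piLp_toLp] using h

lemma enorm_star {k : ℕ} (v : Fin k → ℂ) : enorm (star v) = enorm v := by
  simp [enorm_eq, Pi.star_apply, Complex.norm_conj]

lemma enorm_vecMul_le {a b : ℕ} (A : Matrix (Fin a) (Fin b) ℂ) (w : Fin a → ℂ) :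
    enorm (w ᵥ* A) ≤ specNorm A * enorm w := by
  have h1 : w ᵥ* A = star (Aᴴ *ᵥ star w) := by
    rw [Matrix.star_mulVec, Matrix.conjTranspose_conjTranspose, star_star]
  rw [h1, enorm_star, ← enorm_star w, ← specNorm_conjTranspose]
  exact enorm_mulVec_le Aᴴ (star w)

lemma enorm_vecMul_le_frob {a b : ℕ} (A : Matrix (Fin a) (Fin b) ℂ) (w : Fin a → ℂ) :
    enorm (w ᵥ* A) ≤ Real.sqrt (∑ j, ∑ k, ‖A j k‖ ^ 2) * enorm w := by
  rw [enorm_eq, enorm_eq, ← Real.sqrt_mul (by positivity)]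
  apply Real.sqrt_le_sqrt
  have hk : ∀ k : Fin b, ‖(w ᵥ* A) k‖ ^ 2
      ≤ (∑ j, ‖A j k‖ ^ 2) * (∑ j, ‖w j‖ ^ 2) := by
    intro k
    have h0 : (w ᵥ* A) k = ∑ j, w j * A j k := by
      simp [Matrix.vecMul, dotProduct]
    have h1 : ‖(w ᵥ* A) k‖ ≤ ∑ j, ‖w j‖ * ‖A j k‖ := by
      rw [h0]
      refine le_trans (norm_sum_le _ _) (le_of_eq ?_)
      exact Finset.sum_congr rfl fun j _ => norm_mul _ _
    have h2 : (∑ j, ‖w j‖ * ‖A j k‖) ^ 2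
        ≤ (∑ j, ‖w j‖ ^ 2) * (∑ j, ‖A j k‖ ^ 2) :=
      Finset.sum_mul_sq_le_sq_mul_sq _ _ _
    calc ‖(w ᵥ* A) k‖ ^ 2
        ≤ (∑ j, ‖w j‖ * ‖A j k‖) ^ 2 :=
          pow_le_pow_left₀ (norm_nonneg _) h1 2
      _ ≤ (∑ j, ‖A j k‖ ^ 2) * (∑ j, ‖w j‖ ^ 2) := by
          linarith [h2]
  calc ∑ k, ‖(w ᵥ* A) k‖ ^ 2
      ≤ ∑ k, (∑ j, ‖A j k‖ ^ 2) * (∑ j, ‖w j‖ ^ 2) :=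
        Finset.sum_le_sum fun k _ => hk k
    _ = (∑ j, ∑ k, ‖A j k‖ ^ 2) * (∑ j, ‖w j‖ ^ 2) := by
        rw [← Finset.sum_mul, Finset.sum_comm]

/-! ### Summation utilities -/

def stack (m n : ℕ) (u v : Polynomial ℂ) : Fin (m + n + 2) → ℂ :=
  fun k => if (k : ℕ) ≤ m then u.coeff k else v.coeff ((k : ℕ) - (m + 1))

lemma sum_range_split {M : Type*} [AddCommMonoid M] (a b : ℕ) (f : ℕ → M) :
    ∑ k ∈ Finset.range (a + b), f k
      = (∑ k ∈ Finset.range a, f k) + ∑ i ∈ Finset.range b, f (a + i) := by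
  induction b with
  | zero => simp
  | succ b ih =>
      rw [← Nat.add_assoc, Finset.sum_range_succ, ih, Finset.sum_range_succ, add_assoc]

lemma sum_range_ite_shift {M : Type*} [AddCommMonoid M] (N k : ℕ) (g : ℕ → M) :
    ∑ j ∈ Finset.range N, (if k ≤ j then g (j - k) else 0)
      = ∑ i ∈ Finset.range (N - k), g i := by
  have h0 : ∑ j ∈ Finset.Ico k N, (if k ≤ j then g (j - k) else 0)
      = ∑ j ∈ Finset.range N, (if k ≤ j then g (j - k) else 0) := by
    apply Finset.sum_subset
    · intro x hx
      simp only [Finset.mem_Ico] at hx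
      simp [hx.2]
    · intro x hx hx2
      simp only [Finset.mem_range] at hx
      have : ¬ k ≤ x := fun h => hx2 (Finset.mem_Ico.mpr ⟨h, hx⟩)
      simp [this]
  rw [← h0]
  have h1 : ∑ j ∈ Finset.Ico k N, (if k ≤ j then g (j - k) else 0)
      = ∑ j ∈ Finset.Ico k N, g (j - k) := by
    apply Finset.sum_congr rfl
    intro j hj
    simp [(Finset.mem_Ico.mp hj).1]
  rw [h1, Finset.sum_Ico_eq_sum_range]
  apply Finset.sum_congr rfl
  intro i _
  congr 1
  omega

lemma sum_range_ext {M : Type*} [AddCommMonoid M] {b B : ℕ} (g : ℕ → M)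
    (hbB : b ≤ B) (hg : ∀ i, b ≤ i → g i = 0) :
    ∑ i ∈ Finset.range B, g i = ∑ i ∈ Finset.range b, g i := by
  refine (Finset.sum_subset (Finset.range_subset_range.2 hbB) fun x _ hx => ?_).symm
  exact hg x (by simpa using hx)

/-! ### The Sylvester matrix as polynomial multiplication -/

lemma coeff_mul_expand (u q : Polynomial ℂ) (M j : ℕ) (hu : u.natDegree < M) :
    (q * u).coeff j
      = ∑ k ∈ Finset.range M, (if k ≤ j then q.coeff (j - k) * u.coeff k else 0) := by
  rw [mul_comm, Polynomial.coeff_mul, Finset.Nat.sum_antidiagonal_eq_sum_range_succ_mk]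
  set T : ℕ → ℂ := fun k => if k ≤ j then q.coeff (j - k) * u.coeff k else 0 with hT
  have h1 : ∑ k ∈ Finset.range (j + 1), u.coeff k * q.coeff (j - k)
      = ∑ k ∈ Finset.range (j + 1), T k := by
    apply Finset.sum_congr rfl
    intro k hk
    have : k ≤ j := by simpa [Nat.lt_succ_iff] using hk
    simp [hT, this, mul_comm]
  have h2 : ∑ k ∈ Finset.range (j + 1), T k
      = ∑ k ∈ Finset.range (max M (j + 1)), T k := by
    refine Finset.sum_subset (Finset.range_subset_range.2 (le_max_right _ _)) fun x _ hx => ?_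
    have : ¬ x ≤ j := by simpa [Nat.lt_succ_iff] using hx
    simp [hT, this]
  have h3 : ∑ k ∈ Finset.range (max M (j + 1)), T k = ∑ k ∈ Finset.range M, T k := by
    apply sum_range_ext
    · exact le_max_left _ _
    · intro i hi
      have : u.coeff i = 0 := Polynomial.coeff_eq_zero_of_natDegree_lt (lt_of_lt_of_le hu hi)
      simp [hT, this]
  rw [h1, h2, h3]

lemma sylv_mulVec (m n : ℕ) (p q u v : Polynomial ℂ) (hu : u.natDegree ≤ m)
    (hv : v.natDegree ≤ n) (j : Fin (m + n + 1)) :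
    (sylv m n p q *ᵥ stack m n u v) j = (q * u - p * v).coeff (j : ℕ) := by
  set f : ℕ → ℂ := fun k =>
    (if k ≤ m then (if k ≤ (j : ℕ) then q.coeff ((j : ℕ) - k) else 0) * u.coeff k
     else (if k - (m + 1) ≤ (j : ℕ) then -p.coeff ((j : ℕ) - (k - (m + 1))) else 0)
            * v.coeff (k - (m + 1))) with hf
  have h1 : (sylv m n p q *ᵥ stack m n u v) j = ∑ k ∈ Finset.range (m + n + 2), f k := by
    rw [← Fin.sum_univ_eq_sum_range]
    simp only [Matrix.mulVec, dotProduct]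
    apply Finset.sum_congr rfl
    intro k _
    by_cases hk : (k : ℕ) ≤ m <;> simp [sylv, stack, hf, hk]
  rw [h1]
  have e : m + n + 2 = (m + 1) + (n + 1) := by omega
  rw [e, sum_range_split (m + 1) (n + 1) f]
  have hA : ∑ k ∈ Finset.range (m + 1), f k = (q * u).coeff (j : ℕ) := by
    rw [coeff_mul_expand u q (m + 1) (j : ℕ) (Nat.lt_succ_of_le hu)]
    apply Finset.sum_congr rfl
    intro k hk
    have hkm : k ≤ m := by simpa [Nat.lt_succ_iff] using hk
    simp [hf, hkm, ite_mul, zero_mul]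
  have hB : ∑ i ∈ Finset.range (n + 1), f ((m + 1) + i) = -((p * v).coeff (j : ℕ)) := by
    rw [coeff_mul_expand v p (n + 1) (j : ℕ) (Nat.lt_succ_of_le hv), ← Finset.sum_neg_distrib]
    apply Finset.sum_congr rfl
    intro i hi
    have h1 : ¬ (m + 1 + i ≤ m) := by omega
    have h2 : m + 1 + i - (m + 1) = i := by omega
    simp only [hf, h1, if_false, h2]
    by_cases hij : i ≤ (j : ℕ) <;> simp [hij]
  rw [hA, hB, Polynomial.coeff_sub]
  ring

/-! ### Bézout with degree control: full row rank of `S` -/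

lemma reduce (s t : ℕ) (r d f u0 v0 : Polynomial ℂ) (hr : r.natDegree ≤ s)
    (hrs : r.coeff s ≠ 0) (hd : d.natDegree ≤ t) (hf : f.natDegree ≤ s + t)
    (h : d * u0 - r * v0 = f) :
    ∃ u v : Polynomial ℂ, u.natDegree ≤ s ∧ v.natDegree ≤ t ∧ d * u - r * v = f := by
  have hr0 : r ≠ 0 := fun h0 => hrs (by simp [h0])
  have hdeg : r.natDegree = s := le_antisymm hr (Polynomial.le_natDegree_of_ne_zero hrs)
  have hc0 : r.leadingCoeff ≠ 0 := Polynomial.leadingCoeff_ne_zero.mpr hr0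
  have hm : (r * Polynomial.C r.leadingCoeff⁻¹).Monic :=
    Polynomial.monic_mul_leadingCoeff_inv hr0
  set rm := r * Polynomial.C r.leadingCoeff⁻¹ with hrm
  set u := u0 %ₘ rm with hudef
  set t' := u0 /ₘ rm with ht'
  have hsplit : u + rm * t' = u0 := Polynomial.modByMonic_add_div u0 rm
  have hus : u.natDegree ≤ s := by
    rcases eq_or_ne u 0 with h0 | h0
    · simp [h0]
    · have hlt : u.degree < rm.degree := Polynomial.degree_modByMonic_lt u0 hm
      have he : rm.degree = r.degree := Polynomial.degree_mul_leadingCoeff_inv r hr0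
      have := Polynomial.natDegree_lt_natDegree h0 (he ▸ hlt)
      omega
  set v := v0 - d * (Polynomial.C r.leadingCoeff⁻¹ * t') with hvdef
  have heq : d * u - r * v = f := by
    have hu0 : u = u0 - rm * t' := by
      rw [← hsplit]; ring
    rw [hvdef, hu0, hrm, ← h]
    ring
  refine ⟨u, v, hus, ?_, heq⟩
  rcases eq_or_ne v 0 with h0 | h0
  · simp [h0]
  · have h1 : r * v = d * u - f := by rw [← heq]; ring
    have h2 : (r * v).natDegree = s + v.natDegree := by
      rw [Polynomial.natDegree_mul hr0 h0, hdeg]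
    have h3 : (d * u - f).natDegree ≤ s + t := by
      refine le_trans (Polynomial.natDegree_sub_le _ _) (max_le ?_ hf)
      refine le_trans (Polynomial.natDegree_mul_le) (by omega)
    rw [h1] at h2
    omega

lemma bezout (m n i : ℕ) (p q : Polynomial ℂ) (hp : p.natDegree ≤ m) (hq : q.natDegree ≤ n)
    (hco : IsCoprime p q) (hlead : p.coeff m ≠ 0 ∨ q.coeff n ≠ 0) (hi : i ≤ m + n) :
    ∃ u v : Polynomial ℂ, u.natDegree ≤ m ∧ v.natDegree ≤ n ∧
      q * u - p * v = Polynomial.X ^ i := by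
  obtain ⟨a, b, hab⟩ := hco
  have h0 : q * (Polynomial.X ^ i * b) - p * (-(Polynomial.X ^ i * a)) = Polynomial.X ^ i := by
    calc q * (Polynomial.X ^ i * b) - p * (-(Polynomial.X ^ i * a))
        = Polynomial.X ^ i * (a * p + b * q) := by ring
      _ = Polynomial.X ^ i := by rw [hab, mul_one]
  have hxi : (Polynomial.X ^ i : Polynomial ℂ).natDegree ≤ m + n := by
    simpa [Polynomial.natDegree_X_pow] using hi
  rcases hlead with hl | hl
  · exact reduce m n p q (Polynomial.X ^ i) (Polynomial.X ^ i * b) (-(Polynomial.X ^ i * a))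
      hp hl hq hxi h0
  · obtain ⟨u, v, hu, hv, huv⟩ := reduce n m q p (-(Polynomial.X ^ i))
      (-(Polynomial.X ^ i * a)) (Polynomial.X ^ i * b) hq hl hp
      (by simpa [Polynomial.natDegree_X_pow] using (by omega : i ≤ n + m))
      (by linear_combination -h0)
    exact ⟨v, u, hv, hu, by linear_combination -huv⟩

lemma sylv_vecMul_ker (m n : ℕ) (p q : Polynomial ℂ) (hp : p.natDegree ≤ m)
    (hq : q.natDegree ≤ n) (hco : IsCoprime p q) (hlead : p.coeff m ≠ 0 ∨ q.coeff n ≠ 0)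
    (w : Fin (m + n + 1) → ℂ) (hw : w ᵥ* sylv m n p q = 0) : w = 0 := by
  funext i
  obtain ⟨u, v, hu, hv, huv⟩ := bezout m n i p q hp hq hco hlead (Nat.lt_succ_iff.mp i.2)
  have h1 : w ⬝ᵥ (sylv m n p q *ᵥ stack m n u v) = w i := by
    rw [dotProduct]
    have h2 : ∀ j ∈ Finset.univ, w j * (sylv m n p q *ᵥ stack m n u v) j
        = w j * (Polynomial.X ^ (i : ℕ) : Polynomial ℂ).coeff (j : ℕ) := by
      intro j _
      rw [sylv_mulVec m n p q u v hu hv j, huv]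
    rw [Finset.sum_congr rfl h2, Finset.sum_eq_single i]
    · simp [Polynomial.coeff_X_pow]
    · intro j _ hj
      have : (j : ℕ) ≠ (i : ℕ) := fun h => hj (Fin.ext h)
      simp [Polynomial.coeff_X_pow, this]
    · intro h
      exact absurd (Finset.mem_univ i) h
  rw [Matrix.dotProduct_mulVec, hw, zero_dotProduct] at h1
  simpa using h1.symm

lemma gram_isUnit (m n : ℕ) (p q : Polynomial ℂ) (hp : p.natDegree ≤ m)
    (hq : q.natDegree ≤ n) (hco : IsCoprime p q) (hlead : p.coeff m ≠ 0 ∨ q.coeff n ≠ 0) :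
    IsUnit (sylv m n p q * (sylv m n p q)ᴴ) := by
  open scoped ComplexOrder in
  rw [← Matrix.mulVec_injective_iff_isUnit]
  have hker : ∀ y : Fin (m + n + 1) → ℂ,
      (sylv m n p q * (sylv m n p q)ᴴ) *ᵥ y = 0 → y = 0 := by
    intro y hy
    have h2 : star y ⬝ᵥ ((sylv m n p q * (sylv m n p q)ᴴ) *ᵥ y) = 0 := by
      rw [hy, dotProduct_zero]
    rw [← Matrix.mulVec_mulVec, Matrix.dotProduct_mulVec] at h2
    have h3 : star y ᵥ* sylv m n p q = star ((sylv m n p q)ᴴ *ᵥ y) := by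
      rw [Matrix.star_mulVec, Matrix.conjTranspose_conjTranspose]
    rw [h3] at h2
    have h4 : (sylv m n p q)ᴴ *ᵥ y = 0 := dotProduct_star_self_eq_zero.mp h2
    have h5 : star y ᵥ* sylv m n p q = 0 := by rw [h3, h4]; simp
    have h6 := sylv_vecMul_ker m n p q hp hq hco hlead (star y) h5
    have := congrArg star h6
    simpa using this
  intro x y hxy
  have h7 : (sylv m n p q * (sylv m n p q)ᴴ) *ᵥ (x - y) = 0 := by
    rw [Matrix.mulVec_sub]
    rw [show (sylv m n p q * (sylv m n p q)ᴴ) *ᵥ x = (sylv m n p q * (sylv m n p q)ᴴ) *ᵥ y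
      from hxy, sub_self]
  exact sub_eq_zero.mp (hker _ h7)

lemma sylv_mul_pinv (m n : ℕ) (p q : Polynomial ℂ)
    (hU : IsUnit (sylv m n p q * (sylv m n p q)ᴴ)) :
    sylv m n p q * pinv (sylv m n p q) = 1 := by
  rw [pinv, ← Matrix.mul_assoc]
  exact Matrix.mul_nonsing_inv _ ((Matrix.isUnit_iff_isUnit_det _).mp hU)

/-! ### Degenerate rational functions give left-kernel vectors -/

lemma coeff_tail (r : Polynomial ℂ) (s i : ℕ) (h : r.natDegree ≤ s) (h0 : r.coeff s = 0)
    (hi : s ≤ i) : r.coeff i = 0 := by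
  rcases eq_or_lt_of_le hi with h1 | h1
  · rw [← h1]; exact h0
  · exact Polynomial.coeff_eq_zero_of_natDegree_lt (lt_of_le_of_lt h h1)

lemma sylv_degenerate_ker (m n : ℕ) (pt qt : Polynomial ℂ) (hpt : pt.natDegree ≤ m)
    (hqt : qt.natDegree ≤ n)
    (hdeg : (∃ z : ℂ, pt.eval z = 0 ∧ qt.eval z = 0) ∨ (pt.coeff m = 0 ∧ qt.coeff n = 0)) :
    ∃ w : Fin (m + n + 1) → ℂ, w ≠ 0 ∧ w ᵥ* sylv m n pt qt = 0 := by
  rcases hdeg with ⟨z, hz1, hz2⟩ | ⟨hl1, hl2⟩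
  · refine ⟨fun j => z ^ (j : ℕ), ?_, ?_⟩
    · intro h
      have := congrFun h ⟨0, by omega⟩
      simp at this
    · funext k
      have hk2 : (k : ℕ) < m + n + 2 := k.2
      have h1 : ((fun j : Fin (m + n + 1) => z ^ (j : ℕ)) ᵥ* sylv m n pt qt) k
          = ∑ j ∈ Finset.range (m + n + 1), (z ^ j *
              (if (k : ℕ) ≤ m then (if (k : ℕ) ≤ j then qt.coeff (j - (k : ℕ)) else 0)
               else (if (k : ℕ) - (m + 1) ≤ j
                      then -pt.coeff (j - ((k : ℕ) - (m + 1))) else 0))) := by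
        rw [← Fin.sum_univ_eq_sum_range]
        simp only [Matrix.vecMul, dotProduct, sylv]
      rw [h1, Pi.zero_apply]
      by_cases hk : (k : ℕ) ≤ m
      · simp only [hk, if_true]
        have h2 : ∀ j ∈ Finset.range (m + n + 1),
            z ^ j * (if (k : ℕ) ≤ j then qt.coeff (j - (k : ℕ)) else 0)
              = (if (k : ℕ) ≤ j then z ^ ((k : ℕ) + (j - (k : ℕ))) * qt.coeff (j - (k : ℕ))
                 else 0) := by
          intro j _
          by_cases hkj : (k : ℕ) ≤ j
          · simp only [hkj, if_true]
            congr 2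
            omega
          · simp [hkj]
        rw [Finset.sum_congr rfl h2, sum_range_ite_shift (m + n + 1) (k : ℕ)
            (fun i => z ^ ((k : ℕ) + i) * qt.coeff i)]
        have h3 : ∑ i ∈ Finset.range (m + n + 1 - (k : ℕ)), z ^ ((k : ℕ) + i) * qt.coeff i
            = z ^ (k : ℕ) * ∑ i ∈ Finset.range (m + n + 1 - (k : ℕ)), qt.coeff i * z ^ i := by
          rw [Finset.mul_sum]
          apply Finset.sum_congr rfl
          intro i _
          rw [pow_add]
          ring
        rw [h3, ← Polynomial.eval_eq_sum_range' (lt_of_le_of_lt hqt (by omega)), hz2, mul_zero]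
      · simp only [hk, if_false]
        have h2 : ∀ j ∈ Finset.range (m + n + 1),
            z ^ j * (if (k : ℕ) - (m + 1) ≤ j then -pt.coeff (j - ((k : ℕ) - (m + 1))) else 0)
              = (if (k : ℕ) - (m + 1) ≤ j
                  then z ^ (((k : ℕ) - (m + 1)) + (j - ((k : ℕ) - (m + 1))))
                        * -pt.coeff (j - ((k : ℕ) - (m + 1)))
                 else 0) := by
          intro j _
          by_cases hkj : (k : ℕ) - (m + 1) ≤ j
          · simp only [hkj, if_true]
            congr 2
            omega
          · simp [hkj]
        rw [Finset.sum_congr rfl h2, sum_range_ite_shift (m + n + 1) ((k : ℕ) - (m + 1))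
            (fun i => z ^ (((k : ℕ) - (m + 1)) + i) * -pt.coeff i)]
        have h3 : ∑ i ∈ Finset.range (m + n + 1 - ((k : ℕ) - (m + 1))),
              z ^ (((k : ℕ) - (m + 1)) + i) * -pt.coeff i
            = -(z ^ ((k : ℕ) - (m + 1)) *
                ∑ i ∈ Finset.range (m + n + 1 - ((k : ℕ) - (m + 1))), pt.coeff i * z ^ i) := by
          rw [Finset.mul_sum, ← Finset.sum_neg_distrib]
          apply Finset.sum_congr rfl
          intro i _
          rw [pow_add]
          ring
        have hknm : (k : ℕ) - (m + 1) ≤ n := by omega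
        rw [h3, ← Polynomial.eval_eq_sum_range' (lt_of_le_of_lt hpt (by omega)), hz1,
          mul_zero, neg_zero]
  · refine ⟨fun j => if (j : ℕ) = m + n then 1 else 0, ?_, ?_⟩
    · intro h
      have := congrFun h ⟨m + n, by omega⟩
      simp at this
    · funext k
      have hk2 : (k : ℕ) < m + n + 2 := k.2
      have h1 : ((fun j : Fin (m + n + 1) => if (j : ℕ) = m + n then (1 : ℂ) else 0)
            ᵥ* sylv m n pt qt) k
          = sylv m n pt qt ⟨m + n, by omega⟩ k := by
        simp only [Matrix.vecMul, dotProduct]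
        rw [Finset.sum_eq_single (⟨m + n, by omega⟩ : Fin (m + n + 1))]
        · simp
        · intro j _ hj
          have : (j : ℕ) ≠ m + n := by
            intro h
            exact hj (Fin.ext (by simpa using h))
          simp [this]
        · intro h
          exact absurd (Finset.mem_univ _) h
      rw [h1, Pi.zero_apply]
      by_cases hk : (k : ℕ) ≤ m
      · have hix : n ≤ m + n - (k : ℕ) := by omega
        simp only [sylv, hk, if_true]
        rw [if_pos (show (k : ℕ) ≤ (m + n : ℕ) by omega)]
        exact coeff_tail qt n _ hqt hl2 hix
      · have hix : m ≤ m + n - ((k : ℕ) - (m + 1)) := by omega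
        simp only [sylv, hk, if_false]
        rw [if_pos (show (k : ℕ) - (m + 1) ≤ (m + n : ℕ) by omega)]
        rw [coeff_tail pt m _ hpt hl1 hix, neg_zero]

/-! ### Frobenius bound on `S - S̃` -/

lemma sylv_frob_le (m n : ℕ) (p q pt qt : Polynomial ℂ) (hp : p.natDegree ≤ m)
    (hq : q.natDegree ≤ n) (hpt : pt.natDegree ≤ m) (hqt : qt.natDegree ≤ n) :
    ∑ j, ∑ k, ‖(sylv m n p q - sylv m n pt qt) j k‖ ^ 2
      ≤ ((m : ℝ) + n + 1) *
        ((∑ i ∈ Finset.range (m + 1), ‖p.coeff i - pt.coeff i‖ ^ 2)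
          + (∑ i ∈ Finset.range (n + 1), ‖q.coeff i - qt.coeff i‖ ^ 2)) := by
  set Dp := ∑ i ∈ Finset.range (m + 1), ‖p.coeff i - pt.coeff i‖ ^ 2 with hDp
  set Dq := ∑ i ∈ Finset.range (n + 1), ‖q.coeff i - qt.coeff i‖ ^ 2 with hDq
  have hDp0 : 0 ≤ Dp := by positivity
  have hDq0 : 0 ≤ Dq := by positivity
  rw [Finset.sum_comm]
  have hcol : ∀ k : Fin (m + n + 2),
      (∑ j, ‖(sylv m n p q - sylv m n pt qt) j k‖ ^ 2)
        = if (k : ℕ) ≤ m then Dq else Dp := by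
    intro k
    have hk2 : (k : ℕ) < m + n + 2 := k.2
    by_cases hk : (k : ℕ) ≤ m
    · rw [if_pos hk]
      have h1 : ∀ j : Fin (m + n + 1),
          ‖(sylv m n p q - sylv m n pt qt) j k‖ ^ 2
            = (if (k : ℕ) ≤ (j : ℕ)
                then ‖q.coeff ((j : ℕ) - (k : ℕ))
                        - qt.coeff ((j : ℕ) - (k : ℕ))‖ ^ 2
                else 0) := by
        intro j
        by_cases hkj : (k : ℕ) ≤ (j : ℕ) <;>
          simp [Matrix.sub_apply, sylv, hk, hkj]
      rw [Finset.sum_congr rfl fun j _ => h1 j]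
      have h2 : ∑ j : Fin (m + n + 1), (if (k : ℕ) ≤ (j : ℕ)
            then ‖q.coeff ((j : ℕ) - (k : ℕ))
                    - qt.coeff ((j : ℕ) - (k : ℕ))‖ ^ 2 else 0)
          = ∑ j ∈ Finset.range (m + n + 1), (if (k : ℕ) ≤ j
            then ‖q.coeff (j - (k : ℕ)) - qt.coeff (j - (k : ℕ))‖ ^ 2 else 0) :=
        Fin.sum_univ_eq_sum_range (fun j => if (k : ℕ) ≤ j
            then ‖q.coeff (j - (k : ℕ)) - qt.coeff (j - (k : ℕ))‖ ^ 2 else 0) _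
      rw [h2, sum_range_ite_shift (m + n + 1) (k : ℕ)
          (fun i => ‖q.coeff i - qt.coeff i‖ ^ 2)]
      apply sum_range_ext
      · omega
      · intro i hi
        rw [Polynomial.coeff_eq_zero_of_natDegree_lt (lt_of_le_of_lt hq (by omega)),
          Polynomial.coeff_eq_zero_of_natDegree_lt (lt_of_le_of_lt hqt (by omega))]
        simp
    · rw [if_neg hk]
      have h1 : ∀ j : Fin (m + n + 1),
          ‖(sylv m n p q - sylv m n pt qt) j k‖ ^ 2
            = (if (k : ℕ) - (m + 1) ≤ (j : ℕ)
                then ‖p.coeff ((j : ℕ) - ((k : ℕ) - (m + 1)))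
                        - pt.coeff ((j : ℕ) - ((k : ℕ) - (m + 1)))‖ ^ 2
                else 0) := by
        intro j
        by_cases hkj : (k : ℕ) - (m + 1) ≤ (j : ℕ)
        · simp only [Matrix.sub_apply, sylv, hk, if_false, hkj, if_true]
          rw [show -p.coeff ((j : ℕ) - ((k : ℕ) - (m + 1)))
                - -pt.coeff ((j : ℕ) - ((k : ℕ) - (m + 1)))
              = -(p.coeff ((j : ℕ) - ((k : ℕ) - (m + 1)))
                  - pt.coeff ((j : ℕ) - ((k : ℕ) - (m + 1)))) by ring,
            norm_neg]
        · simp [Matrix.sub_apply, sylv, hk, hkj]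
      rw [Finset.sum_congr rfl fun j _ => h1 j]
      have h2 : ∑ j : Fin (m + n + 1), (if (k : ℕ) - (m + 1) ≤ (j : ℕ)
            then ‖p.coeff ((j : ℕ) - ((k : ℕ) - (m + 1)))
                    - pt.coeff ((j : ℕ) - ((k : ℕ) - (m + 1)))‖ ^ 2 else 0)
          = ∑ j ∈ Finset.range (m + n + 1), (if (k : ℕ) - (m + 1) ≤ j
            then ‖p.coeff (j - ((k : ℕ) - (m + 1)))
                    - pt.coeff (j - ((k : ℕ) - (m + 1)))‖ ^ 2 else 0) :=
        Fin.sum_univ_eq_sum_range (fun j => if (k : ℕ) - (m + 1) ≤ j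
            then ‖p.coeff (j - ((k : ℕ) - (m + 1)))
                    - pt.coeff (j - ((k : ℕ) - (m + 1)))‖ ^ 2 else 0) _
      rw [h2, sum_range_ite_shift (m + n + 1) ((k : ℕ) - (m + 1))
          (fun i => ‖p.coeff i - pt.coeff i‖ ^ 2)]
      apply sum_range_ext
      · omega
      · intro i hi
        rw [Polynomial.coeff_eq_zero_of_natDegree_lt (lt_of_le_of_lt hp (by omega)),
          Polynomial.coeff_eq_zero_of_natDegree_lt (lt_of_le_of_lt hpt (by omega))]
        simp
  rw [Finset.sum_congr rfl fun k _ => hcol k]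
  have h3 : ∑ k : Fin (m + n + 2), (if (k : ℕ) ≤ m then Dq else Dp)
      = ∑ k ∈ Finset.range (m + n + 2), (if k ≤ m then Dq else Dp) :=
    Fin.sum_univ_eq_sum_range (fun k => if k ≤ m then Dq else Dp) _
  rw [h3]
  have e : m + n + 2 = (m + 1) + (n + 1) := by omega
  rw [e, sum_range_split (m + 1) (n + 1) (fun k => if k ≤ m then Dq else Dp)]
  have hA : ∑ k ∈ Finset.range (m + 1), (if k ≤ m then Dq else Dp) = ((m : ℝ) + 1) * Dq := by
    rw [Finset.sum_congr rfl fun k hk => if_pos (by simpa [Nat.lt_succ_iff] using hk)]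
    rw [Finset.sum_const, Finset.card_range, nsmul_eq_mul]
    push_cast
    ring
  have hB : ∑ i ∈ Finset.range (n + 1), (if (m + 1) + i ≤ m then Dq else Dp)
      = ((n : ℝ) + 1) * Dp := by
    rw [Finset.sum_congr rfl fun i _ => if_neg (by omega)]
    rw [Finset.sum_const, Finset.card_range, nsmul_eq_mul]
    push_cast
    ring
  rw [hA, hB]
  have hm0 : (0 : ℝ) ≤ (m : ℝ) := Nat.cast_nonneg m
  have hn0 : (0 : ℝ) ≤ (n : ℝ) := Nat.cast_nonneg n
  nlinarith [hDp0, hDq0, hm0, hn0]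

/-! ### Lower bound on `‖S‖` -/

lemma one_le_sqrt2_specNorm (m n : ℕ) (p q : Polynomial ℂ) (hp : p.natDegree ≤ m)
    (hq : q.natDegree ≤ n) (hnorm : coeffNorm2 m n p q = 1) :
    1 ≤ Real.sqrt 2 * specNorm (sylv m n p q) := by
  set s := specNorm (sylv m n p q) with hs
  have hs0 : 0 ≤ s := specNorm_nonneg _
  set Dp0 := ∑ i ∈ Finset.range (m + 1), ‖p.coeff i‖ ^ 2 with hDp0
  set Dq0 := ∑ i ∈ Finset.range (n + 1), ‖q.coeff i‖ ^ 2 with hDq0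
  have hDp0n : 0 ≤ Dp0 := by positivity
  have hDq0n : 0 ≤ Dq0 := by positivity
  -- coefficient vector of q
  have hq1 : Real.sqrt Dq0 ≤ s := by
    have hx : stack m n 1 0 = fun k : Fin (m + n + 2) => if (k : ℕ) = 0 then 1 else 0 := by
      funext k
      simp only [stack]
      by_cases h0 : (k : ℕ) ≤ m
      · simp [h0, Polynomial.coeff_one]
      · have hne : (k : ℕ) ≠ 0 := by omega
        simp [h0, hne]
    have hxe : enorm (stack m n 1 0) = 1 := by
      rw [hx, enorm_eq]
      have h2 : ∑ k : Fin (m + n + 2), ‖if (k : ℕ) = 0 then (1 : ℂ) else 0‖ ^ 2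
          = ∑ k ∈ Finset.range (m + n + 2), (if k = 0 then (1 : ℝ) else 0) := by
        have h2a : ∑ k : Fin (m + n + 2), ‖if (k : ℕ) = 0 then (1 : ℂ) else 0‖ ^ 2
            = ∑ k : Fin (m + n + 2), (if (k : ℕ) = 0 then (1 : ℝ) else 0) := by
          apply Finset.sum_congr rfl
          intro k _
          by_cases h0 : (k : ℕ) = 0 <;> simp [h0]
        rw [h2a]
        exact Fin.sum_univ_eq_sum_range (fun k => if k = 0 then (1 : ℝ) else 0) _
      rw [h2, Finset.sum_ite_eq' (Finset.range (m + n + 2)) 0 (fun _ => (1 : ℝ))]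
      simp
    have hvec : sylv m n p q *ᵥ stack m n 1 0 = fun j : Fin (m + n + 1) => q.coeff (j : ℕ) := by
      funext j
      rw [sylv_mulVec m n p q 1 0 (by simp) (by simp) j]
      simp
    have hle := enorm_mulVec_le (sylv m n p q) (stack m n 1 0)
    rw [hvec, hxe, mul_one] at hle
    refine le_trans (le_of_eq ?_) hle
    rw [enorm_eq]
    congr 1
    have h4 : ∑ j : Fin (m + n + 1), ‖q.coeff (j : ℕ)‖ ^ 2
        = ∑ j ∈ Finset.range (m + n + 1), ‖q.coeff j‖ ^ 2 :=
      Fin.sum_univ_eq_sum_range (fun j => ‖q.coeff j‖ ^ 2) _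
    rw [h4]
    refine (sum_range_ext _ (by omega) fun i hi => ?_).symm
    rw [Polynomial.coeff_eq_zero_of_natDegree_lt (lt_of_le_of_lt hq (by omega))]
    simp
  -- coefficient vector of p
  have hp1 : Real.sqrt Dp0 ≤ s := by
    have hx : stack m n 0 1 = fun k : Fin (m + n + 2) => if (k : ℕ) = m + 1 then 1 else 0 := by
      funext k
      simp only [stack]
      by_cases h0 : (k : ℕ) ≤ m
      · have hne : (k : ℕ) ≠ m + 1 := by omega
        simp [h0, hne]
      · have : ((k : ℕ) - (m + 1) = 0) ↔ ((k : ℕ) = m + 1) := by omega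
        simp [h0, Polynomial.coeff_one, this]
    have hxe : enorm (stack m n 0 1) = 1 := by
      rw [hx, enorm_eq]
      have h2 : ∑ k : Fin (m + n + 2), ‖if (k : ℕ) = m + 1 then (1 : ℂ) else 0‖ ^ 2
          = ∑ k ∈ Finset.range (m + n + 2), (if k = m + 1 then (1 : ℝ) else 0) := by
        have h2a : ∑ k : Fin (m + n + 2),
              ‖if (k : ℕ) = m + 1 then (1 : ℂ) else 0‖ ^ 2
            = ∑ k : Fin (m + n + 2), (if (k : ℕ) = m + 1 then (1 : ℝ) else 0) := by
          apply Finset.sum_congr rfl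
          intro k _
          by_cases h0 : (k : ℕ) = m + 1 <;> simp [h0]
        rw [h2a]
        exact Fin.sum_univ_eq_sum_range (fun k => if k = m + 1 then (1 : ℝ) else 0) _
      rw [h2, Finset.sum_ite_eq' (Finset.range (m + n + 2)) (m + 1) (fun _ => (1 : ℝ))]
      simp [Finset.mem_range]
    have hvec : sylv m n p q *ᵥ stack m n 0 1
        = fun j : Fin (m + n + 1) => -(p.coeff (j : ℕ)) := by
      funext j
      rw [sylv_mulVec m n p q 0 1 (by simp) (by simp) j]
      simp
    have hle := enorm_mulVec_le (sylv m n p q) (stack m n 0 1)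
    rw [hvec, hxe, mul_one] at hle
    refine le_trans (le_of_eq ?_) hle
    rw [enorm_eq]
    congr 1
    have h4 : ∑ j : Fin (m + n + 1), ‖-(p.coeff (j : ℕ))‖ ^ 2
        = ∑ j ∈ Finset.range (m + n + 1), ‖-(p.coeff j)‖ ^ 2 :=
      Fin.sum_univ_eq_sum_range (fun j => ‖-(p.coeff j)‖ ^ 2) _
    rw [h4, Finset.sum_congr rfl fun j _ => by rw [norm_neg]]
    refine (sum_range_ext _ (by omega) fun i hi => ?_).symm
    rw [Polynomial.coeff_eq_zero_of_natDegree_lt (lt_of_le_of_lt hp (by omega))]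
    simp
  have e1 : Dq0 ≤ s ^ 2 := by
    rw [← Real.sq_sqrt hDq0n]
    exact pow_le_pow_left₀ (Real.sqrt_nonneg _) hq1 2
  have e2 : Dp0 ≤ s ^ 2 := by
    rw [← Real.sq_sqrt hDp0n]
    exact pow_le_pow_left₀ (Real.sqrt_nonneg _) hp1 2
  have hsum : Dp0 + Dq0 = 1 := by
    simpa [coeffNorm2, hDp0, hDq0] using hnorm
  have h2s : (1 : ℝ) ≤ 2 * s ^ 2 := by linarith
  nlinarith [Real.sq_sqrt (show (0 : ℝ) ≤ 2 by norm_num), Real.sqrt_nonneg 2,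
    mul_nonneg (Real.sqrt_nonneg 2) hs0]

end DegAux

open DegAux

/-- if `r = p/q` is nondegenerate and normalized and `r̃ = p̃/q̃ ∈ R_{m,n}`
(normalized) is degenerate, then `√(2(m+n+1)) d(r,r̃) κ(S) ≥ 1`. -/
theorem degenerate_perturbation_lower_bound (m n : ℕ) (p q pt qt : Polynomial ℂ)
    (hp : p.natDegree ≤ m) (hq : q.natDegree ≤ n)
    (hpt : pt.natDegree ≤ m) (hqt : qt.natDegree ≤ n)
    (hco : IsCoprime p q) (hlead : p.coeff m ≠ 0 ∨ q.coeff n ≠ 0)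
    (hnorm : coeffNorm2 m n p q = 1) (hnormt : coeffNorm2 m n pt qt = 1)
    (hopt : ∀ a : ℂ, ‖a‖ = 1 →
      coeffDist m n p q pt qt 1 ≤ coeffDist m n p q pt qt a)
    (hdeg : (∃ z : ℂ, pt.eval z = 0 ∧ qt.eval z = 0) ∨ (pt.coeff m = 0 ∧ qt.coeff n = 0)) :
    1 ≤ Real.sqrt (2 * (m + n + 1)) * coeffDist m n p q pt qt 1 * condS m n p q := by
  classical
  obtain ⟨w, hw0, hwker⟩ := sylv_degenerate_ker m n pt qt hpt hqt hdeg
  have hU := gram_isUnit m n p q hp hq hco hlead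
  have hSpinv : sylv m n p q * pinv (sylv m n p q) = 1 := sylv_mul_pinv m n p q hU
  set S := sylv m n p q with hS
  set St := sylv m n pt qt with hSt
  set Dp := ∑ i ∈ Finset.range (m + 1), ‖p.coeff i - pt.coeff i‖ ^ 2 with hDp
  set Dq := ∑ i ∈ Finset.range (n + 1), ‖q.coeff i - qt.coeff i‖ ^ 2 with hDq
  have hdD : coeffDist m n p q pt qt 1 = Real.sqrt (Dp + Dq) := by
    simp [coeffDist, hDp, hDq, one_mul]
  have hDpos : 0 ≤ Dp + Dq := by positivity
  have hwpos : 0 < DegAux.enorm w := enorm_pos w hw0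
  have hchain : w = (w ᵥ* (S - St)) ᵥ* pinv S := by
    conv_lhs => rw [← Matrix.vecMul_one w, ← hSpinv, ← Matrix.vecMul_vecMul]
    congr 1
    rw [Matrix.vecMul_sub, hwker, sub_zero]
  have h1 : DegAux.enorm w ≤ specNorm (pinv S) * DegAux.enorm (w ᵥ* (S - St)) := by
    conv_lhs => rw [hchain]
    exact enorm_vecMul_le _ _
  have h2 : DegAux.enorm (w ᵥ* (S - St)) ≤ Real.sqrt (((m : ℝ) + n + 1) * (Dp + Dq)) * DegAux.enorm w := by
    refine le_trans (enorm_vecMul_le_frob _ _) ?_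
    apply mul_le_mul_of_nonneg_right _ (enorm_nonneg _)
    apply Real.sqrt_le_sqrt
    exact sylv_frob_le m n p q pt qt hp hq hpt hqt
  have hkey : 1 ≤ Real.sqrt (((m : ℝ) + n + 1) * (Dp + Dq)) * specNorm (pinv S) := by
    have h3 : DegAux.enorm w
        ≤ (Real.sqrt (((m : ℝ) + n + 1) * (Dp + Dq)) * specNorm (pinv S)) * DegAux.enorm w := by
      calc DegAux.enorm w ≤ specNorm (pinv S) * DegAux.enorm (w ᵥ* (S - St)) := h1
        _ ≤ specNorm (pinv S) * (Real.sqrt (((m : ℝ) + n + 1) * (Dp + Dq)) * DegAux.enorm w) :=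
            mul_le_mul_of_nonneg_left h2 (specNorm_nonneg _)
        _ = _ := by ring
    nlinarith [hwpos]
  have hS2 := one_le_sqrt2_specNorm m n p q hp hq hnorm
  have hsplit : Real.sqrt (2 * ((m : ℝ) + n + 1)) * coeffDist m n p q pt qt 1 * condS m n p q
      = (Real.sqrt 2 * specNorm S)
        * (Real.sqrt (((m : ℝ) + n + 1) * (Dp + Dq)) * specNorm (pinv S)) := by
    rw [condS, hdD, Real.sqrt_mul (by norm_num : (0 : ℝ) ≤ 2),
      Real.sqrt_mul (by positivity : (0 : ℝ) ≤ (m : ℝ) + n + 1)]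
    rw [← hS]
    ring
  have hgoal : 1 ≤ Real.sqrt (2 * ((m : ℝ) + n + 1)) * coeffDist m n p q pt qt 1
      * condS m n p q := by
    rw [hsplit]
    calc (1 : ℝ) = 1 * 1 := by norm_num
      _ ≤ _ := mul_le_mul hS2 hkey (by norm_num) (le_trans (by norm_num) hS2)
  exact_mod_cast hgoal
end
end
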